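/- arXiv:1408.1857 — 6 statements merged into one kernel-verified Lean document; each statement's English description precedes it below -/
import Mathlib

section
/- Let g be a d-dimensional nilpotent real Lie algebra with a semidirect product decomposition g = m ⋉ n, where dim n = k, and fix a Jordan–Hölder series 0 = g_0 ⊆ g_1 ⊆ ⋯ ⊆ g_d = g with g_k = n. If ξ ∈ g* satisfies g(ξ) = m(ξ|m) ⊕ n(ξ|n) (internal direct sum), then J(ξ) = J(ξ|n) ∪ {k + j : j ∈ J(ξ|m)}, and this union is disjoint. -/
open Module

/-- The isotropy subalgebra `g(ξ) = {x ∈ g : ξ([x,y]) = 0 for all y ∈ g}`. -/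
noncomputable def isotropy {g : Type*} [LieRing g] [LieAlgebra ℝ g]
    (ξ : Module.Dual ℝ g) : Submodule ℝ g where
  carrier := {x | ∀ y : g, ξ ⁅x, y⁆ = 0}
  add_mem' := by
    intro a b ha hb y
    simp [add_lie, ha y, hb y]
  zero_mem' := by intro y; simp
  smul_mem' := by
    intro c a ha y
    simp [smul_lie, ha y]

/-- The relative isotropy `W(ξ|W) = {x ∈ W : ξ([x,y]) = 0 for all y ∈ W}`. -/
noncomputable def isotropyOn {g : Type*} [LieRing g] [LieAlgebra ℝ g]
    (W : Submodule ℝ g) (ξ : Module.Dual ℝ g) : Submodule ℝ g where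
  carrier := {x | x ∈ W ∧ ∀ y ∈ W, ξ ⁅x, y⁆ = 0}
  add_mem' := by
    intro a b ha hb
    exact ⟨W.add_mem ha.1 hb.1, fun y hy => by simp [add_lie, ha.2 y hy, hb.2 y hy]⟩
  zero_mem' := ⟨W.zero_mem, fun y hy => by simp⟩
  smul_mem' := by
    intro c a ha
    exact ⟨W.smul_mem c ha.1, fun y hy => by simp [smul_lie, ha.2 y hy]⟩

/-- The jump set of the series `gs`, truncated at index `b`, relative to an
"isotropy" subspace `I`: the set of `j ∈ {1,…,b}` with `gs j ⊄ gs (j-1) + I`. -/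
def jumpSetGen {g : Type*} [LieRing g] [LieAlgebra ℝ g]
    (gs : ℕ → Submodule ℝ g) (b : ℕ) (I : Submodule ℝ g) : Set ℕ :=
  {j | 1 ≤ j ∧ j ≤ b ∧ ¬ gs j ≤ gs (j - 1) ⊔ I}

/-- for a Jordan–Hölder series of the nilpotent Lie algebra
`g = m ⋉ n` passing through `n` at index `k`, if
`g(ξ) = m(ξ|m) ⊕ n(ξ|n)`, then `J(ξ) = J(ξ|n) ⊔ (k + J(ξ|m))`. -/
theorem stmt4 {g : Type*} [LieRing g] [LieAlgebra ℝ g] [Module.Finite ℝ g]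
    [LieRing.IsNilpotent g]
    (n : LieIdeal ℝ g) (m : LieSubalgebra ℝ g)
    (hcompl : IsCompl m.toSubmodule n.toSubmodule)
    (d k : ℕ) (hd : Module.finrank ℝ g = d) (hk : Module.finrank ℝ n.toSubmodule = k)
    -- the Jordan–Hölder series
    (gs : ℕ → Submodule ℝ g)
    (hgs0 : gs 0 = ⊥) (hgsd : gs d = ⊤)
    (hchain : ∀ j < d, gs j ≤ gs (j + 1))
    (hdim : ∀ j ≤ d, Module.finrank ℝ (gs j) = j)
    (hbr : ∀ j, 1 ≤ j → j ≤ d → ∀ x : g, ∀ y ∈ gs j, ⁅x, y⁆ ∈ gs (j - 1))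
    (hgk : gs k = n.toSubmodule)
    -- the series of m, i.e. the projections p(g_{k+j}) along n
    (p : g →ₗ[ℝ] g)
    (hp : p = m.toSubmodule.subtype.comp
      (Submodule.linearProjOfIsCompl m.toSubmodule n.toSubmodule hcompl))
    (ms : ℕ → Submodule ℝ g) (hms : ∀ j, ms j = (gs (k + j)).map p)
    -- the hypothesis g(ξ) = m(ξ|m) ⊕ n(ξ|n)
    (ξ : Module.Dual ℝ g)
    (hiso : isotropy ξ = isotropyOn m.toSubmodule ξ ⊔ isotropyOn n.toSubmodule ξ)
    (hdisj : Disjoint (isotropyOn m.toSubmodule ξ) (isotropyOn n.toSubmodule ξ)) :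
    jumpSetGen gs d (isotropy ξ) =
        jumpSetGen gs k (isotropyOn n.toSubmodule ξ) ∪
          ((k + ·) '' jumpSetGen ms (d - k) (isotropyOn m.toSubmodule ξ)) ∧
      Disjoint (jumpSetGen gs k (isotropyOn n.toSubmodule ξ))
        ((k + ·) '' jumpSetGen ms (d - k) (isotropyOn m.toSubmodule ξ)) := by
  have hmemOn : ∀ (W : Submodule ℝ g) (x : g),
      x ∈ isotropyOn W ξ ↔ x ∈ W ∧ ∀ y ∈ W, ξ ⁅x, y⁆ = 0 := fun _ _ => Iff.rfl
  have hkd : k ≤ d := by rw [← hk, ← hd]; exact Submodule.finrank_le _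
  have hmono : ∀ b ≤ d, ∀ a ≤ b, gs a ≤ gs b := by
    intro b
    induction b with
    | zero => intro _ a ha; simp [Nat.le_zero.mp ha]
    | succ c ih =>
      intro hbd a ha
      rcases Nat.lt_or_ge a (c + 1) with h | h
      · exact le_trans (ih (by omega) a (by omega)) (hchain c (by omega))
      · have : a = c + 1 := le_antisymm ha h
        rw [this]
  have hpM : ∀ u ∈ m.toSubmodule, p u = u := by
    intro u hu
    rw [hp]
    exact congrArg (Subtype.val)
      (Submodule.linearProjOfIsCompl_apply_left hcompl ⟨u, hu⟩)
  have hpN : ∀ v ∈ n.toSubmodule, p v = 0 := by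
    intro v hv
    rw [hp]
    simp
    exact Submodule.linearProjOfIsCompl_apply_right' hcompl hv
  have hpsub : ∀ x : g, x - p x ∈ n.toSubmodule := by
    intro x
    have hx : x ∈ m.toSubmodule ⊔ n.toSubmodule := by
      rw [hcompl.sup_eq_top]; trivial
    obtain ⟨u, hu, v, hv, rfl⟩ := Submodule.mem_sup.mp hx
    have : p (u + v) = u := by rw [map_add, hpM u hu, hpN v hv, add_zero]
    rw [this]
    simpa using hv
  have hIm : isotropyOn m.toSubmodule ξ ≤ isotropy ξ := by rw [hiso]; exact le_sup_left
  have hIn : isotropyOn n.toSubmodule ξ ≤ isotropy ξ := by rw [hiso]; exact le_sup_right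
  -- key equivalence in range 1..k
  have key1 : ∀ j, 1 ≤ j → j ≤ k →
      (gs j ≤ gs (j - 1) ⊔ isotropy ξ ↔ gs j ≤ gs (j - 1) ⊔ isotropyOn n.toSubmodule ξ) := by
    intro j h1 hjk
    constructor
    · intro h x hx
      obtain ⟨a, ha, w, hw, rfl⟩ := Submodule.mem_sup.mp (h hx)
      rw [hiso] at hw
      obtain ⟨u, hu, v, hv, rfl⟩ := Submodule.mem_sup.mp hw
      have hxN : a + (u + v) ∈ n.toSubmodule := by
        rw [← hgk]; exact hmono k hkd j hjk hx
      have haN : a ∈ n.toSubmodule := by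
        rw [← hgk]; exact hmono k hkd (j - 1) (by omega) ha
      have hvN : v ∈ n.toSubmodule := ((hmemOn _ v).mp hv).1
      have huN : u ∈ n.toSubmodule := by
        have : (a + (u + v)) - a - v ∈ n.toSubmodule :=
          Submodule.sub_mem _ (Submodule.sub_mem _ hxN haN) hvN
        simpa using this
      have huM : u ∈ m.toSubmodule := ((hmemOn _ u).mp hu).1
      have hu0 : u = 0 := by
        have := hcompl.disjoint
        exact (Submodule.disjoint_def.mp this) u huM huN
      refine Submodule.mem_sup.mpr ⟨a, ha, v, hv, by rw [hu0]; abel⟩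
    · intro h
      exact h.trans (sup_le_sup_left hIn _)
  -- key equivalence in range k+1..d
  have key2 : ∀ i, 1 ≤ i → i ≤ d - k →
      (gs (k + i) ≤ gs (k + i - 1) ⊔ isotropy ξ ↔
        ms i ≤ ms (i - 1) ⊔ isotropyOn m.toSubmodule ξ) := by
    intro i hi1 hid
    have hidx : k + (i - 1) = k + i - 1 := by omega
    have h1d : k + i - 1 ≤ d := by omega
    constructor
    · intro h z hz
      rw [hms] at hz
      obtain ⟨x, hx, rfl⟩ := hz
      obtain ⟨a, ha, w, hw, hsum⟩ := Submodule.mem_sup.mp (h hx)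
      rw [hiso] at hw
      obtain ⟨u, hu, v, hv, rfl⟩ := Submodule.mem_sup.mp hw
      have hpx : p x = p a + u := by
        rw [← hsum, map_add, map_add, hpM u ((hmemOn _ u).mp hu).1,
          hpN v ((hmemOn _ v).mp hv).1, add_zero]
      rw [hpx]
      refine Submodule.mem_sup.mpr ⟨p a, ?_, u, hu, rfl⟩
      rw [hms, hidx]
      exact Submodule.mem_map_of_mem ha
    · intro h x hx
      have hpx : p x ∈ ms i := by rw [hms]; exact Submodule.mem_map_of_mem hx
      obtain ⟨b, hb, u, hu, hsum⟩ := Submodule.mem_sup.mp (h hpx)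
      rw [hms] at hb
      obtain ⟨a, ha, rfl⟩ := hb
      have hNsub : n.toSubmodule ≤ gs (k + i - 1) := by
        rw [← hgk]; exact hmono (k + i - 1) h1d k (by omega)
      have ha' : a ∈ gs (k + i - 1) := by rwa [hidx] at ha
      have hmem1 : a + (x - p x) + (p a - a) ∈ gs (k + i - 1) := by
        refine Submodule.add_mem _ (Submodule.add_mem _ ha' (hNsub (hpsub x))) ?_
        have : p a - a = -(a - p a) := by abel
        rw [this]
        exact Submodule.neg_mem _ (hNsub (hpsub a))
      refine Submodule.mem_sup.mpr ⟨_, hmem1, u, hIm hu, ?_⟩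
      have : p x = p a + u := hsum.symm
      rw [show a + (x - p x) + (p a - a) + u = x - p x + (p a + u) by abel, ← this]
      abel
  constructor
  · ext j
    simp only [jumpSetGen, Set.mem_union, Set.mem_image, Set.mem_setOf_eq]
    constructor
    · rintro ⟨h1, hjd, hns⟩
      by_cases hjk : j ≤ k
      · exact Or.inl ⟨h1, hjk, fun hle => hns ((key1 j h1 hjk).mpr hle)⟩
      · refine Or.inr ⟨j - k, ⟨by omega, by omega, ?_⟩, by omega⟩
        have hkey := key2 (j - k) (by omega) (by omega)
        rw [show k + (j - k) = j from by omega] at hkey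
        exact fun hle => hns (hkey.mpr hle)
    · rintro (⟨h1, hjk, hns⟩ | ⟨i, ⟨hi1, hid, hns⟩, rfl⟩)
      · exact ⟨h1, le_trans hjk hkd, fun hle => hns ((key1 j h1 hjk).mp hle)⟩
      · exact ⟨by omega, by omega, fun hle => hns ((key2 i hi1 hid).mp hle)⟩
  · rw [Set.disjoint_left]
    rintro j ⟨h1, hjk, _⟩ ⟨i, ⟨hi1, _, _⟩, hij⟩
    simp only at hij
    omega
end

section
/- Let g be a d-dimensional nilpotent real Lie algebra with a semidirect product decomposition g = m ⋉ n, where dim n = k, and fix a Jordan–Hölder series 0 = g_0 ⊆ g_1 ⊆ ⋯ ⊆ g_d = g with g_k = n. Let ξ ∈ g* satisfy g(ξ) = m(ξ|m) ⊕ n(ξ|n). Then for every j with 1 ≤ j ≤ k one has: j ∈ J(ξ) if and only if n(ξ|n) + g_{j−1} is a proper subspace of n(ξ|n) + g_j, i.e. if and only if j ∈ J(ξ|n). -/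
open Module

/-- in the setting of Proposition `jump`, for `1 ≤ j ≤ k` one has
`j ∈ J(ξ)` iff `n(ξ|n) + g_{j-1} ⊊ n(ξ|n) + g_j` iff `j ∈ J(ξ|n)`. -/
theorem stmt5 {g : Type*} [LieRing g] [LieAlgebra ℝ g] [Module.Finite ℝ g]
    [LieRing.IsNilpotent g]
    (n : LieIdeal ℝ g) (m : LieSubalgebra ℝ g)
    (hcompl : IsCompl m.toSubmodule n.toSubmodule)
    (d k : ℕ) (hd : Module.finrank ℝ g = d) (hk : Module.finrank ℝ n.toSubmodule = k)
    (gs : ℕ → Submodule ℝ g)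
    (hgs0 : gs 0 = ⊥) (hgsd : gs d = ⊤)
    (hchain : ∀ j < d, gs j ≤ gs (j + 1))
    (hdim : ∀ j ≤ d, Module.finrank ℝ (gs j) = j)
    (hbr : ∀ j, 1 ≤ j → j ≤ d → ∀ x : g, ∀ y ∈ gs j, ⁅x, y⁆ ∈ gs (j - 1))
    (hgk : gs k = n.toSubmodule)
    (ξ : Module.Dual ℝ g)
    (hiso : isotropy ξ = isotropyOn m.toSubmodule ξ ⊔ isotropyOn n.toSubmodule ξ)
    (hdisj : Disjoint (isotropyOn m.toSubmodule ξ) (isotropyOn n.toSubmodule ξ)) :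
    ∀ j, 1 ≤ j → j ≤ k →
      ((j ∈ jumpSetGen gs d (isotropy ξ) ↔
          isotropyOn n.toSubmodule ξ ⊔ gs (j - 1) < isotropyOn n.toSubmodule ξ ⊔ gs j) ∧
        (j ∈ jumpSetGen gs d (isotropy ξ) ↔
          j ∈ jumpSetGen gs k (isotropyOn n.toSubmodule ξ))) := by

  intro j hj1 hjk
  have hkd : k ≤ d := by
    rw [← hd, ← hk]; exact Submodule.finrank_le _
  have hjd : j ≤ d := le_trans hjk hkd
  -- monotonicity of the chain
  have mono : ∀ i j' : ℕ, i ≤ j' → j' ≤ d → gs i ≤ gs j' := by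
    intro i j' hij hj'd
    induction j' with
    | zero => simpa [Nat.le_zero.mp hij] using le_refl (gs 0)
    | succ p ih =>
      rcases Nat.lt_or_ge i (p+1) with h | h
      · exact le_trans (ih (Nat.lt_succ_iff.mp h) (le_trans (Nat.le_succ p) hj'd))
          (hchain p (Nat.lt_of_lt_of_le (Nat.lt_succ_self p) hj'd))
      · have : i = p + 1 := le_antisymm hij h
        simp [this]
  have hsub : gs (j-1) ≤ gs j := by
    have := mono (j-1) j (Nat.sub_le j 1) hjd
    exact this
  have hjn : gs j ≤ n.toSubmodule := hgk ▸ mono j k hjk hkd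
  have hjn' : gs (j-1) ≤ n.toSubmodule := le_trans hsub hjn
  set In := isotropyOn n.toSubmodule ξ with hIn
  have hInn : In ≤ n.toSubmodule := fun x hx => hx.1
  have hImm : isotropyOn m.toSubmodule ξ ≤ m.toSubmodule := fun x hx => hx.1
  -- key equivalence
  have key : gs j ≤ gs (j - 1) ⊔ isotropy ξ ↔ gs j ≤ gs (j - 1) ⊔ In := by
    constructor
    · intro h x hx
      have hx' : x ∈ gs (j-1) ⊔ (isotropyOn m.toSubmodule ξ ⊔ In) := by
        rw [← hiso]; exact h hx
      rw [Submodule.mem_sup] at hx'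
      obtain ⟨a, ha, w, hw, hxw⟩ := hx'
      rw [Submodule.mem_sup] at hw
      obtain ⟨b, hb, c, hc, hwc⟩ := hw
      have hbn : b ∈ n.toSubmodule := by
        have : b = x - a - c := by
          rw [← hxw, ← hwc]; abel
        rw [this]
        exact Submodule.sub_mem _ (Submodule.sub_mem _ (hjn hx) (hjn' ha)) (hInn hc)
      have hb0 : b = 0 := by
        have := hcompl.disjoint
        rw [Submodule.disjoint_def] at this
        exact this b (hImm hb) hbn
      rw [Submodule.mem_sup]
      exact ⟨a, ha, c, hc, by rw [← hxw, ← hwc, hb0]; abel⟩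
    · intro h
      rw [hiso]
      exact le_trans h (sup_le_sup_left le_sup_right _)
  have keylt : ¬ gs j ≤ gs (j - 1) ⊔ In ↔ In ⊔ gs (j-1) < In ⊔ gs j := by
    constructor
    · intro h
      refine lt_of_le_of_ne (sup_le_sup_left hsub _) (fun he => h ?_)
      intro x hx
      have : x ∈ In ⊔ gs (j-1) := by rw [he]; exact Submodule.mem_sup_right hx
      rw [Submodule.mem_sup] at this
      obtain ⟨b, hb, c, hc, rfl⟩ := this
      exact Submodule.add_mem _ (Submodule.mem_sup_right hb) (Submodule.mem_sup_left hc)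
    · intro h hc
      exact absurd (sup_le le_sup_left (hc.trans (sup_le le_sup_right le_sup_left))) h.not_ge
  constructor
  · constructor
    · rintro ⟨-, -, h⟩
      exact keylt.mp (fun hc => h (key.mpr hc))
    · intro h
      exact ⟨hj1, hjd, fun hc => (keylt.mpr h) (key.mp hc)⟩
  · constructor
    · rintro ⟨-, -, h⟩
      exact ⟨hj1, hjk, fun hc => h (key.mpr hc)⟩
    · rintro ⟨-, -, h⟩
      exact ⟨hj1, hjd, fun hc => h (key.mp hc)⟩
end

section
/- Let g be a d-dimensional nilpotent real Lie algebra with a semidirect product decomposition g = m ⋉ n, where dim n = k, and fix a Jordan–Hölder series 0 = g_0 ⊆ g_1 ⊆ ⋯ ⊆ g_d = g with g_k = n. Let ξ ∈ g* satisfy g(ξ) = m(ξ|m) ⊕ n(ξ|n). Then for every j with k+1 ≤ j ≤ d one has: j ∈ J(ξ) if and only if m(ξ|m) + g_{j−1} is a proper subspace of m(ξ|m) + g_j, and this holds if and only if j − k ∈ J(ξ|m). -/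
open Module

/-- in the setting of Proposition `jump`, for `k+1 ≤ j ≤ d` one has
`j ∈ J(ξ)` iff `m(ξ|m) + g_{j-1} ⊊ m(ξ|m) + g_j` iff `j - k ∈ J(ξ|m)`. -/
theorem stmt6 {g : Type*} [LieRing g] [LieAlgebra ℝ g] [Module.Finite ℝ g]
    [LieRing.IsNilpotent g]
    (n : LieIdeal ℝ g) (m : LieSubalgebra ℝ g)
    (hcompl : IsCompl m.toSubmodule n.toSubmodule)
    (d k : ℕ) (hd : Module.finrank ℝ g = d) (hk : Module.finrank ℝ n.toSubmodule = k)
    (gs : ℕ → Submodule ℝ g)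
    (hgs0 : gs 0 = ⊥) (hgsd : gs d = ⊤)
    (hchain : ∀ j < d, gs j ≤ gs (j + 1))
    (hdim : ∀ j ≤ d, Module.finrank ℝ (gs j) = j)
    (hbr : ∀ j, 1 ≤ j → j ≤ d → ∀ x : g, ∀ y ∈ gs j, ⁅x, y⁆ ∈ gs (j - 1))
    (hgk : gs k = n.toSubmodule)
    (p : g →ₗ[ℝ] g)
    (hp : p = m.toSubmodule.subtype.comp
      (Submodule.linearProjOfIsCompl m.toSubmodule n.toSubmodule hcompl))
    (ms : ℕ → Submodule ℝ g) (hms : ∀ j, ms j = (gs (k + j)).map p)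
    (ξ : Module.Dual ℝ g)
    (hiso : isotropy ξ = isotropyOn m.toSubmodule ξ ⊔ isotropyOn n.toSubmodule ξ)
    (hdisj : Disjoint (isotropyOn m.toSubmodule ξ) (isotropyOn n.toSubmodule ξ)) :
    ∀ j, k + 1 ≤ j → j ≤ d →
      ((j ∈ jumpSetGen gs d (isotropy ξ) ↔
          isotropyOn m.toSubmodule ξ ⊔ gs (j - 1) < isotropyOn m.toSubmodule ξ ⊔ gs j) ∧
        (isotropyOn m.toSubmodule ξ ⊔ gs (j - 1) < isotropyOn m.toSubmodule ξ ⊔ gs j ↔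
          j - k ∈ jumpSetGen ms (d - k) (isotropyOn m.toSubmodule ξ))) := by
  intro j hj1 hj2
  set Im := isotropyOn m.toSubmodule ξ with hIm
  set In := isotropyOn n.toSubmodule ξ with hIn
  -- monotonicity of the series
  have hmono : ∀ j', j' ≤ d → ∀ i ≤ j', gs i ≤ gs j' := by
    intro j' hj'
    induction j' with
    | zero => intro i hi; simp [Nat.le_zero.mp hi]
    | succ t ih =>
      intro i hi
      rcases Nat.eq_or_lt_of_le hi with h | h
      · exact h ▸ le_rfl
      · exact (ih (by omega) i (by omega)).trans (hchain t (by omega))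
  have hIn_le : In ≤ n.toSubmodule := fun x hx => hx.1
  have hIm_le : Im ≤ m.toSubmodule := fun x hx => hx.1
  have hn_le : n.toSubmodule ≤ gs (j - 1) := by
    rw [← hgk]; exact hmono (j-1) (by omega) k (by omega)
  -- facts about the projection p
  have hpx_mem : ∀ x : g, p x ∈ m.toSubmodule := by
    intro x; rw [hp]; exact ((m.toSubmodule).linearProjOfIsCompl n.toSubmodule hcompl x).2
  have hsub_mem : ∀ x : g, x - p x ∈ n.toSubmodule := by
    intro x
    obtain ⟨a, b, ha, hb, hab⟩ := Submodule.codisjoint_iff_exists_add_eq.mp hcompl.codisjoint x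
    have hpa : p a = a := by
      rw [hp]; exact congrArg (Submodule.subtype m.toSubmodule)
        (Submodule.linearProjOfIsCompl_apply_left hcompl ⟨a, ha⟩)
    have hpb : p b = 0 := by
      rw [hp]; exact congrArg (Submodule.subtype m.toSubmodule)
        (Submodule.linearProjOfIsCompl_apply_right' hcompl hb)
    have : x - p x = b := by rw [← hab, map_add, hpa, hpb]; abel
    rw [this]; exact hb
  -- gs jj splits as (map p) ⊔ n for jj ≥ k
  have hsplit : ∀ jj, k ≤ jj → jj ≤ d → gs jj = (gs jj).map p ⊔ n.toSubmodule := by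
    intro jj hkj hjd
    have hnle : n.toSubmodule ≤ gs jj := by
      rw [← hgk]; exact hmono jj hjd k hkj
    apply le_antisymm
    · intro x hx
      have : x = p x + (x - p x) := by abel
      rw [this]
      exact Submodule.add_mem _ (Submodule.mem_sup_left ⟨x, hx, rfl⟩)
        (Submodule.mem_sup_right (hsub_mem x))
    · refine sup_le ?_ hnle
      rintro _ ⟨x, hx, rfl⟩
      have : p x = x - (x - p x) := by abel
      rw [this]
      exact Submodule.sub_mem _ hx (hnle (hsub_mem x))
  -- helper: strict inequality of sups
  have hltiff : ∀ X Y Z : Submodule ℝ g, Y ≤ Z → (X ⊔ Y < X ⊔ Z ↔ ¬ Z ≤ X ⊔ Y) := by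
    intro X Y Z hYZ
    constructor
    · intro hlt hle
      exact hlt.not_ge (sup_le le_sup_left hle)
    · intro hnle
      refine lt_of_le_of_ne (sup_le_sup_left hYZ X) (fun he => hnle ?_)
      rw [he]; exact le_sup_right
  -- removing n: for X ≤ Y ≤ m, Y ≤ X ⊔ n ↔ Y ≤ X
  have hstrip : ∀ X Y : Submodule ℝ g, X ≤ m.toSubmodule → Y ≤ m.toSubmodule →
      (Y ≤ X ⊔ n.toSubmodule ↔ Y ≤ X) := by
    intro X Y hX hY
    constructor
    · intro h
      have h2 : Y ≤ (X ⊔ n.toSubmodule) ⊓ m.toSubmodule := le_inf h hY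
      rwa [sup_inf_assoc_of_le _ hX, (disjoint_iff.mp hcompl.disjoint.symm), sup_bot_eq] at h2
    · intro h; exact h.trans le_sup_left
  have hms1 : ms (j - k) = (gs j).map p := by
    have h : k + (j - k) = j := by omega
    rw [hms, h]
  have hms0 : ms (j - k - 1) = (gs (j - 1)).map p := by
    have h : k + (j - k - 1) = j - 1 := by omega
    rw [hms, h]
  have hms_le_m : ∀ i, ms i ≤ m.toSubmodule := by
    intro i; rw [hms]; rintro _ ⟨x, _, rfl⟩; exact hpx_mem x
  have hmsmono : ms (j - k - 1) ≤ ms (j - k) := by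
    rw [hms0, hms1]
    exact Submodule.map_mono (hmono j hj2 (j-1) (by omega))
  constructor
  · -- first iff
    have hIeq : gs (j - 1) ⊔ isotropy ξ = Im ⊔ gs (j - 1) := by
      rw [hiso, ← sup_assoc]
      have hle : In ≤ gs (j - 1) ⊔ Im := hIn_le.trans (hn_le.trans le_sup_left)
      rw [sup_eq_left.mpr hle, sup_comm]
    constructor
    · intro hj
      obtain ⟨-, -, hne⟩ := hj
      rw [hIeq] at hne
      exact (hltiff Im (gs (j-1)) (gs j) (hmono j hj2 (j-1) (by omega))).mpr hne
    · intro hlt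
      refine ⟨by omega, hj2, ?_⟩
      rw [hIeq]
      exact (hltiff Im (gs (j-1)) (gs j) (hmono j hj2 (j-1) (by omega))).mp hlt
  · -- second iff
    have key : (Im ⊔ gs (j - 1) < Im ⊔ gs j) ↔
        (Im ⊔ ms (j - k - 1) < Im ⊔ ms (j - k)) := by
      rw [hltiff Im (gs (j-1)) (gs j) (hmono j hj2 (j-1) (by omega)),
        hltiff Im (ms (j-k-1)) (ms (j-k)) hmsmono]
      have e1 : gs j = ms (j - k) ⊔ n.toSubmodule := by
        rw [hms1]; exact hsplit j (by omega) hj2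
      have e0 : gs (j - 1) = ms (j - k - 1) ⊔ n.toSubmodule := by
        rw [hms0]; exact hsplit (j-1) (by omega) (by omega)
      rw [e1, e0]
      constructor
      · intro h hle
        apply h
        refine sup_le ?_ (le_sup_right.trans le_sup_right)
        calc ms (j - k) ≤ Im ⊔ ms (j - k - 1) := hle
          _ ≤ Im ⊔ (ms (j - k - 1) ⊔ n.toSubmodule) := sup_le_sup_left le_sup_left Im
      · intro h hle
        apply h
        have hle' : ms (j - k) ≤ (Im ⊔ ms (j - k - 1)) ⊔ n.toSubmodule := by
          calc ms (j - k) ≤ ms (j - k) ⊔ n.toSubmodule := le_sup_left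
            _ ≤ Im ⊔ (ms (j - k - 1) ⊔ n.toSubmodule) := hle
            _ = (Im ⊔ ms (j - k - 1)) ⊔ n.toSubmodule := by rw [sup_assoc]
        exact (hstrip (Im ⊔ ms (j - k - 1)) (ms (j - k))
          (sup_le hIm_le (hms_le_m _)) (hms_le_m _)).mp hle'
    rw [key]
    constructor
    · intro hlt
      refine ⟨by omega, by omega, ?_⟩
      have : j - k - 1 = (j - k) - 1 := rfl
      intro hle
      exact ((hltiff Im (ms (j-k-1)) (ms (j-k)) hmsmono).mp hlt) (hle.trans (by rw [sup_comm]))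
    · rintro ⟨-, -, hne⟩
      refine (hltiff Im (ms (j-k-1)) (ms (j-k)) hmsmono).mpr (fun hle => hne ?_)
      exact hle.trans (by rw [sup_comm])
end

section
/- Let h be a nilpotent real Lie algebra of dimension d > 1 with a fixed Jordan–Hölder series, whose center z := Z(h) is 1-dimensional. If ξ ∈ h* satisfies J(ξ) = e(h), then ξ does not vanish identically on z. -/
open Module

/-- The minimum of a set of naturals, as an element of `ℕ∞`, with `min ∅ = ∞`. -/
noncomputable def eMin (s : Set ℕ) : ℕ∞ := sInf ((↑) '' s)

/-- The order `e1 ≺ e2 ⟺ min(e1 \ e2) < min(e2 \ e1)`, where `min ∅ = ∞`. -/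
def precRel (e1 e2 : Set ℕ) : Prop := eMin (e1 \ e2) < eMin (e2 \ e1)

/-- if `h` is nilpotent of dimension `d > 1` with 1-dimensional
center and `J(ξ) = e(h)`, then `ξ` does not vanish identically on the center. -/
theorem stmt7 {h : Type*} [LieRing h] [LieAlgebra ℝ h] [Module.Finite ℝ h]
    [LieRing.IsNilpotent h]
    (d : ℕ) (hd : Module.finrank ℝ h = d) (hd1 : 1 < d)
    -- the fixed Jordan–Hölder series
    (gs : ℕ → Submodule ℝ h)
    (hgs0 : gs 0 = ⊥) (hgsd : gs d = ⊤)
    (hchain : ∀ j < d, gs j ≤ gs (j + 1))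
    (hdim : ∀ j ≤ d, Module.finrank ℝ (gs j) = j)
    (hbr : ∀ j, 1 ≤ j → j ≤ d → ∀ x : h, ∀ y ∈ gs j, ⁅x, y⁆ ∈ gs (j - 1))
    -- the center is 1-dimensional
    (hz : Module.finrank ℝ (LieAlgebra.center ℝ h) = 1)
    -- J(ξ) = e(h), i.e. J(ξ) is the ≺-minimum of all jump sets
    (ξ : Module.Dual ℝ h)
    (hmin : ∀ η : Module.Dual ℝ h,
      jumpSetGen gs d (isotropy ξ) = jumpSetGen gs d (isotropy η) ∨
        precRel (jumpSetGen gs d (isotropy ξ)) (jumpSetGen gs d (isotropy η))) :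
    ∃ x ∈ LieAlgebra.center ℝ h, ξ x ≠ 0 := by
  
  by_contra hcon
  push_neg at hcon
  set z : Submodule ℝ h := (LieAlgebra.center ℝ h : Submodule ℝ h) with hzdef
  have hmemz : ∀ x : h, x ∈ z ↔ ∀ y : h, ⁅y, x⁆ = 0 := fun x =>
    LieModule.mem_maxTrivSubmodule ℝ h h x
  have hzfin : Module.finrank ℝ z = 1 := hz
  have h1d : 1 ≤ d := hd1.le
  have h2d : 2 ≤ d := hd1
  -- gs 1 = z
  have hgs1z : gs 1 = z := by
    apply Submodule.eq_of_le_of_finrank_eq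
    · intro x hx
      rw [hmemz]
      intro y
      have := hbr 1 le_rfl h1d y x hx
      simpa [hgs0] using this
    · rw [hdim 1 h1d, hzfin]
  -- the center is contained in every isotropy subalgebra
  have hziso : ∀ η : Module.Dual ℝ h, z ≤ isotropy η := by
    intro η x hx y
    have h0 : ⁅y, x⁆ = 0 := (hmemz x).1 hx y
    have hxy : ⁅x, y⁆ = 0 := by
      rw [← lie_skew, h0, neg_zero]
    rw [hxy, map_zero]
  -- gs 2 is contained in isotropy ξ (since ξ vanishes on z)
  have hgs2ξ : gs 2 ≤ isotropy ξ := by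
    intro x hx y
    have hyx : ⁅y, x⁆ ∈ gs 1 := hbr 2 one_le_two h2d y x hx
    rw [hgs1z] at hyx
    have h0 : ξ ⁅y, x⁆ = 0 := hcon _ hyx
    rw [← lie_skew, map_neg, h0, neg_zero]
  -- exists x ∈ gs 2 \ z
  obtain ⟨x, hx2, hxz⟩ : ∃ x ∈ gs 2, x ∉ z := by
    by_contra hc
    push_neg at hc
    have hle : Module.finrank ℝ (gs 2) ≤ Module.finrank ℝ z :=
      Submodule.finrank_mono hc
    rw [hdim 2 h2d, hzfin] at hle
    omega
  obtain ⟨y, hy⟩ : ∃ y : h, ⁅y, x⁆ ≠ 0 := by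
    by_contra hc
    push_neg at hc
    exact hxz ((hmemz x).2 hc)
  have hv1 : ⁅y, x⁆ ∈ gs 1 := hbr 2 one_le_two h2d y x hx2
  obtain ⟨η, hη⟩ : ∃ η : Module.Dual ℝ h, η ⁅y, x⁆ ≠ 0 := by
    by_contra hc
    push_neg at hc
    exact hy ((Module.forall_dual_apply_eq_zero_iff ℝ _).1 hc)
  -- 2 ∈ J(η)
  have h2Jη : 2 ∈ jumpSetGen gs d (isotropy η) := by
    refine ⟨one_le_two, h2d, fun hle => ?_⟩
    have hx' : x ∈ gs (2 - 1) ⊔ isotropy η := hle hx2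
    have heq : gs (2 - 1) ⊔ isotropy η = isotropy η := by
      rw [show (2 : ℕ) - 1 = 1 from rfl, hgs1z]
      exact sup_eq_right.2 (hziso η)
    rw [heq] at hx'
    have h0 := hx' y
    rw [← lie_skew, map_neg, neg_eq_zero] at h0
    exact hη h0
  -- 2 ∉ J(ξ)
  have h2Jξ : 2 ∉ jumpSetGen gs d (isotropy ξ) := by
    intro hmem
    exact hmem.2.2 (le_trans hgs2ξ le_sup_right)
  -- every element of J(ξ) is ≥ 3
  have hJξ3 : ∀ j ∈ jumpSetGen gs d (isotropy ξ), 3 ≤ j := by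
    rintro j ⟨hj1, hjd, hj⟩
    by_contra hc
    interval_cases j
    · exact hj (le_trans (le_of_eq hgs1z) (le_trans (hziso ξ) le_sup_right))
    · exact hj (le_trans hgs2ξ le_sup_right)
  rcases hmin η with heq | hprec
  · exact h2Jξ (heq ▸ h2Jη)
  · have hub : eMin (jumpSetGen gs d (isotropy η) \ jumpSetGen gs d (isotropy ξ)) ≤ 2 :=
      sInf_le ⟨2, ⟨h2Jη, h2Jξ⟩, rfl⟩
    have hlb : (3 : ℕ∞) ≤
        eMin (jumpSetGen gs d (isotropy ξ) \ jumpSetGen gs d (isotropy η)) := by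
      apply le_sInf
      rintro a ⟨j, hj, rfl⟩
      exact_mod_cast hJξ3 j hj.1
    have : (3 : ℕ∞) < 2 := lt_of_le_of_lt hlb (lt_of_lt_of_le hprec hub)
    norm_num at this
end

section
/- Let g be a d-dimensional nilpotent real Lie algebra with a semidirect product decomposition g = m ⋉ n, where dim n = k, and fix a Jordan–Hölder series 0 = g_0 ⊆ g_1 ⊆ ⋯ ⊆ g_d = g with g_k = n. Suppose ξ ∈ g* satisfies ξ([x,y]) = 0 for all x ∈ m, y ∈ n, together with J(ξ) = e(g) and J(ξ|n) = e(n). Then J(ξ|m) = e(m). -/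
open Module

lemma eMin_empty : eMin ∅ = ⊤ := by simp [eMin]

lemma eMin_nonempty (S : Set ℕ) (h : S.Nonempty) : eMin S = ((sInf S : ℕ) : ℕ∞) := by
  apply le_antisymm
  · exact sInf_le ⟨sInf S, Nat.sInf_mem h, rfl⟩
  · apply le_sInf
    rintro _ ⟨s, hs, rfl⟩
    exact_mod_cast Nat.sInf_le hs

lemma eMin_shift (k : ℕ) (S : Set ℕ) : eMin ((k + ·) '' S) = (k : ℕ∞) + eMin S := by
  rcases S.eq_empty_or_nonempty with rfl | h
  · simp [eMin_empty]
  · rw [eMin_nonempty _ h, eMin_nonempty _ (h.image _)]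
    have h2 : (sInf ((k + ·) '' S) : ℕ) = k + sInf S := by
      apply le_antisymm
      · exact Nat.sInf_le ⟨sInf S, Nat.sInf_mem h, rfl⟩
      · obtain ⟨s, hs, heq⟩ := Nat.sInf_mem (h.image (k + ·))
        rw [← heq]
        exact Nat.add_le_add_left (Nat.sInf_le hs) k
    rw [h2]; push_cast; ring

lemma union_shift_diff (k : ℕ) {A X Y : Set ℕ} (hA : ∀ a ∈ A, a ≤ k) (hX : ∀ b ∈ X, 1 ≤ b)
    (hY : ∀ b ∈ Y, 1 ≤ b) :
    (A ∪ (k + ·) '' X) \ (A ∪ (k + ·) '' Y) = (k + ·) '' (X \ Y) := by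
  ext j
  simp only [Set.mem_diff, Set.mem_union, Set.mem_image, not_or, not_exists]
  constructor
  · rintro ⟨hj1 | ⟨i, hiX, rfl⟩, hjA, hjY⟩
    · exact absurd hj1 hjA
    · exact ⟨i, ⟨hiX, fun hiY => (hjY i) ⟨hiY, rfl⟩⟩, rfl⟩
  · rintro ⟨i, ⟨hiX, hiY⟩, rfl⟩
    refine ⟨Or.inr ⟨i, hiX, rfl⟩, fun hA' => ?_, ?_⟩
    · have h1 := hA _ hA'; have h2 := hX _ hiX; omega
    · rintro i' ⟨hi', heq⟩
      have : i' = i := by omega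
      exact hiY (this ▸ hi')

lemma union_shift_eq (k : ℕ) {A X Y : Set ℕ} (hA : ∀ a ∈ A, a ≤ k) (hX : ∀ b ∈ X, 1 ≤ b)
    (hY : ∀ b ∈ Y, 1 ≤ b) (h : A ∪ (k + ·) '' X = A ∪ (k + ·) '' Y) : X = Y := by
  have h1 : X \ Y = ∅ := by
    have := union_shift_diff k hA hX hY
    rw [h, Set.diff_self] at this
    exact Set.image_eq_empty.mp this.symm
  have h2 : Y \ X = ∅ := by
    have := union_shift_diff k hA hY hX
    rw [h, Set.diff_self] at this
    exact Set.image_eq_empty.mp this.symm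
  exact le_antisymm (Set.diff_eq_empty.mp h1) (Set.diff_eq_empty.mp h2)

/-- if `g = m ⋉ n` is nilpotent, `ξ([m,n]) = 0`, `J(ξ) = e(g)`
and `J(ξ|n) = e(n)`, then `J(ξ|m) = e(m)`. Minimality of a jump set is
expressed by comparing it, via `≺`, with the jump sets of all functionals
(every functional on `n`, resp. `m`, is the restriction of one on `g`). -/
theorem stmt11 {g : Type*} [LieRing g] [LieAlgebra ℝ g] [Module.Finite ℝ g]
    [LieRing.IsNilpotent g]
    (n : LieIdeal ℝ g) (m : LieSubalgebra ℝ g)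
    (hcompl : IsCompl m.toSubmodule n.toSubmodule)
    (d k : ℕ) (hd : Module.finrank ℝ g = d) (hk : Module.finrank ℝ n.toSubmodule = k)
    -- the Jordan–Hölder series passing through n at index k
    (gs : ℕ → Submodule ℝ g)
    (hgs0 : gs 0 = ⊥) (hgsd : gs d = ⊤)
    (hchain : ∀ j < d, gs j ≤ gs (j + 1))
    (hdim : ∀ j ≤ d, Module.finrank ℝ (gs j) = j)
    (hbr : ∀ j, 1 ≤ j → j ≤ d → ∀ x : g, ∀ y ∈ gs j, ⁅x, y⁆ ∈ gs (j - 1))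
    (hgk : gs k = n.toSubmodule)
    -- the projected series of m
    (p : g →ₗ[ℝ] g)
    (hp : p = m.toSubmodule.subtype.comp
      (Submodule.linearProjOfIsCompl m.toSubmodule n.toSubmodule hcompl))
    (ms : ℕ → Submodule ℝ g) (hms : ∀ j, ms j = (gs (k + j)).map p)
    (ξ : Module.Dual ℝ g)
    -- ξ([m,n]) = 0
    (hξ : ∀ x ∈ m, ∀ y ∈ n, ξ ⁅x, y⁆ = 0)
    -- J(ξ) = e(g)
    (hJg : ∀ η : Module.Dual ℝ g,
      jumpSetGen gs d (isotropy ξ) = jumpSetGen gs d (isotropy η) ∨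
        precRel (jumpSetGen gs d (isotropy ξ)) (jumpSetGen gs d (isotropy η)))
    -- J(ξ|n) = e(n)
    (hJn : ∀ η : Module.Dual ℝ g,
      jumpSetGen gs k (isotropyOn n.toSubmodule ξ) =
          jumpSetGen gs k (isotropyOn n.toSubmodule η) ∨
        precRel (jumpSetGen gs k (isotropyOn n.toSubmodule ξ))
          (jumpSetGen gs k (isotropyOn n.toSubmodule η))) :
    -- J(ξ|m) = e(m)
    ∀ ζ : Module.Dual ℝ g,
      jumpSetGen ms (d - k) (isotropyOn m.toSubmodule ξ) =
          jumpSetGen ms (d - k) (isotropyOn m.toSubmodule ζ) ∨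
        precRel (jumpSetGen ms (d - k) (isotropyOn m.toSubmodule ξ))
          (jumpSetGen ms (d - k) (isotropyOn m.toSubmodule ζ)) := by
    classical
  -- basic facts about the projection p
  have hpmem : ∀ x : g, p x ∈ m.toSubmodule := by
    intro x; rw [hp]
    exact (Submodule.linearProjOfIsCompl m.toSubmodule n.toSubmodule hcompl x).2
  have hpm : ∀ x ∈ m.toSubmodule, p x = x := by
    intro x hx
    rw [hp]
    exact congrArg Subtype.val
      (Submodule.linearProjOfIsCompl_apply_left hcompl (⟨x, hx⟩ : m.toSubmodule))
  have hpn : ∀ x ∈ n.toSubmodule, p x = 0 := by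
    intro x hx
    rw [hp]
    simp [Submodule.linearProjOfIsCompl_apply_right' hcompl (x := x) hx]
    exact Submodule.linearProjOfIsCompl_apply_right' hcompl hx
  have hqn : ∀ x : g, x - p x ∈ n.toSubmodule := by
    intro x
    have htop : x ∈ m.toSubmodule ⊔ n.toSubmodule := by
      rw [codisjoint_iff.mp hcompl.codisjoint]; trivial
    obtain ⟨a, ha, b, hb, hab⟩ := Submodule.mem_sup.mp htop
    have hpx : p x = a := by
      rw [← hab, map_add, hpm a ha, hpn b hb, add_zero]
    have : x - p x = b := by rw [hpx, ← hab]; abel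
    rw [this]; exact hb
  have hkd : k ≤ d := by
    rw [← hk, ← hd]; exact Submodule.finrank_le _
  have hmono : ∀ i j, i ≤ j → j ≤ d → gs i ≤ gs j := by
    intro i j hij
    induction hij with
    | refl => intro _; exact le_rfl
    | @step j' h ih =>
      intro hj'd
      exact le_trans (ih (by omega)) (hchain j' (by omega))
  have hnle : ∀ j, k ≤ j → j ≤ d → n.toSubmodule ≤ gs j := by
    intro j h1 h2; rw [← hgk]; exact hmono k j h1 h2
  have hjn : ∀ j, j ≤ k → gs j ≤ n.toSubmodule := by
    intro j hj; rw [← hgk]; exact hmono j k hj hkd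
  -- Lie bracket membership facts
  have hlie_n : ∀ x y : g, y ∈ n.toSubmodule → ⁅x, y⁆ ∈ n.toSubmodule := fun x y hy => n.lie_mem hy
  have hlie_m : ∀ x y : g, x ∈ m.toSubmodule → y ∈ m.toSubmodule → ⁅x, y⁆ ∈ m.toSubmodule :=
    fun x y hx hy => m.lie_mem hx hy
  -- skew version of the vanishing hypothesis
  have hθ_skew : ∀ θ : Module.Dual ℝ g,
      (∀ x ∈ m.toSubmodule, ∀ y ∈ n.toSubmodule, θ ⁅x, y⁆ = 0) →
      ∀ x ∈ n.toSubmodule, ∀ y ∈ m.toSubmodule, θ ⁅x, y⁆ = 0 := by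
    intro θ hθ x hx y hy
    rw [← lie_skew x y, map_neg, hθ y hy x hx, neg_zero]
  -- inclusions of isotropy subspaces
  have isoOn_n_le : ∀ θ : Module.Dual ℝ g,
      (∀ x ∈ m.toSubmodule, ∀ y ∈ n.toSubmodule, θ ⁅x, y⁆ = 0) →
      isotropyOn n.toSubmodule θ ≤ isotropy θ := by
    intro θ hθ x hx
    obtain ⟨hxn, hxiso⟩ := hx
    show ∀ y : g, θ ⁅x, y⁆ = 0
    intro y
    have hy : y = p y + (y - p y) := by abel
    calc θ ⁅x, y⁆ = θ ⁅x, p y⁆ + θ ⁅x, y - p y⁆ := by rw [← map_add, ← lie_add, ← hy]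
      _ = 0 := by rw [hθ_skew θ hθ x hxn (p y) (hpmem y), hxiso (y - p y) (hqn y), add_zero]
  have isoOn_m_le : ∀ θ : Module.Dual ℝ g,
      (∀ x ∈ m.toSubmodule, ∀ y ∈ n.toSubmodule, θ ⁅x, y⁆ = 0) →
      isotropyOn m.toSubmodule θ ≤ isotropy θ := by
    intro θ hθ x hx
    obtain ⟨hxm, hxiso⟩ := hx
    show ∀ y : g, θ ⁅x, y⁆ = 0
    intro y
    have hy : y = p y + (y - p y) := by abel
    calc θ ⁅x, y⁆ = θ ⁅x, p y⁆ + θ ⁅x, y - p y⁆ := by rw [← map_add, ← lie_add, ← hy]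
      _ = 0 := by rw [hxiso (p y) (hpmem y), hθ x hxm (y - p y) (hqn y), add_zero]
  have iso_p_mem : ∀ θ : Module.Dual ℝ g,
      (∀ x ∈ m.toSubmodule, ∀ y ∈ n.toSubmodule, θ ⁅x, y⁆ = 0) →
      ∀ x ∈ isotropy θ, p x ∈ isotropyOn m.toSubmodule θ := by
    intro θ hθ x hx
    have hx' : ∀ z : g, θ ⁅x, z⁆ = 0 := hx
    refine ⟨hpmem x, fun y hy => ?_⟩
    have h1 : θ ⁅x - p x, y⁆ = 0 := hθ_skew θ hθ (x - p x) (hqn x) y hy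
    have h2 : ⁅p x, y⁆ = ⁅x, y⁆ - ⁅x - p x, y⁆ := by rw [sub_lie]; abel
    rw [h2, map_sub, hx' y, h1, sub_zero]
  -- Bridge for indices in n
  have bridgeN : ∀ θ : Module.Dual ℝ g,
      (∀ x ∈ m.toSubmodule, ∀ y ∈ n.toSubmodule, θ ⁅x, y⁆ = 0) →
      ∀ j, 1 ≤ j → j ≤ k →
      ((gs j ≤ gs (j - 1) ⊔ isotropy θ) ↔ (gs j ≤ gs (j - 1) ⊔ isotropyOn n.toSubmodule θ)) := by
    intro θ hθ j h1 h2
    constructor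
    · intro h x hx
      obtain ⟨a, ha, b, hb, hab⟩ := Submodule.mem_sup.mp (h hx)
      have hb' : ∀ z : g, θ ⁅b, z⁆ = 0 := hb
      have hxn : x ∈ n.toSubmodule := hjn j h2 hx
      have han : a ∈ n.toSubmodule := hjn (j - 1) (by omega) ha
      have hbn : b ∈ n.toSubmodule := by
        have hba : b = x - a := by rw [← hab]; abel
        rw [hba]; exact Submodule.sub_mem _ hxn han
      exact Submodule.mem_sup.mpr ⟨a, ha, b, ⟨hbn, fun y _ => hb' y⟩, hab⟩
    · intro h
      exact le_trans h (sup_le_sup_left (isoOn_n_le θ hθ) _)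
  -- Bridge for indices in m
  have bridgeM : ∀ θ : Module.Dual ℝ g,
      (∀ x ∈ m.toSubmodule, ∀ y ∈ n.toSubmodule, θ ⁅x, y⁆ = 0) →
      ∀ j, 1 ≤ j → j ≤ d - k →
      ((gs (k + j) ≤ gs (k + j - 1) ⊔ isotropy θ) ↔
        (ms j ≤ ms (j - 1) ⊔ isotropyOn m.toSubmodule θ)) := by
    intro θ hθ j h1 h2
    have hidx : k + j - 1 = k + (j - 1) := by omega
    constructor
    · intro h
      rw [hms j, hms (j - 1)]
      rintro z ⟨x, hx, rfl⟩
      obtain ⟨a, ha, b, hb, hab⟩ := Submodule.mem_sup.mp (h hx)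
      have hpb := iso_p_mem θ hθ b hb
      refine Submodule.mem_sup.mpr ⟨p a, ⟨a, ?_, rfl⟩, p b, hpb, by rw [← map_add, hab]⟩
      rwa [← hidx]
    · intro h x hx
      have hpx : p x ∈ ms j := by rw [hms j]; exact ⟨x, hx, rfl⟩
      obtain ⟨c, hc, b, hb, hcb⟩ := Submodule.mem_sup.mp (h hpx)
      rw [hms (j - 1)] at hc
      obtain ⟨a, ha, rfl⟩ := hc
      have han : a ∈ gs (k + j - 1) := by rwa [← hidx] at ha
      have h4 : p a - a ∈ n.toSubmodule := by
        rw [show p a - a = -(a - p a) by abel]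
        exact Submodule.neg_mem _ (hqn a)
      have hw : x - a - b ∈ n.toSubmodule := by
        have h3 : x - a - b = (x - p x) + (p a - a) := by rw [← hcb]; abel
        rw [h3]
        exact Submodule.add_mem _ (hqn x) h4
      have hwg : x - a - b ∈ gs (k + j - 1) := hnle (k + j - 1) (by omega) (by omega) hw
      have hx' : x = (a + (x - a - b)) + b := by abel
      rw [hx']
      exact Submodule.add_mem _
        (Submodule.mem_sup_left (Submodule.add_mem _ han hwg))
        (Submodule.mem_sup_right (isoOn_m_le θ hθ hb))
  -- decomposition of the jump set
  have decomp : ∀ θ : Module.Dual ℝ g,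
      (∀ x ∈ m.toSubmodule, ∀ y ∈ n.toSubmodule, θ ⁅x, y⁆ = 0) →
      jumpSetGen gs d (isotropy θ) =
        jumpSetGen gs k (isotropyOn n.toSubmodule θ) ∪
          (k + ·) '' jumpSetGen ms (d - k) (isotropyOn m.toSubmodule θ) := by
    intro θ hθ
    ext j
    simp only [jumpSetGen, Set.mem_setOf_eq, Set.mem_union, Set.mem_image]
    constructor
    · rintro ⟨h1, h2, h3⟩
      by_cases hjk : j ≤ k
      · exact Or.inl ⟨h1, hjk, fun hle => h3 ((bridgeN θ hθ j h1 hjk).mpr hle)⟩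
      · refine Or.inr ⟨j - k, ⟨by omega, by omega, fun hle => ?_⟩, by omega⟩
        have hbm := (bridgeM θ hθ (j - k) (by omega) (by omega)).mpr hle
        rw [show k + (j - k) = j by omega] at hbm
        exact h3 hbm
    · rintro (⟨h1, h2, h3⟩ | ⟨i, ⟨h1, h2, h3⟩, rfl⟩)
      · exact ⟨h1, le_trans h2 hkd, fun hle => h3 ((bridgeN θ hθ j h1 h2).mp hle)⟩
      · exact ⟨by omega, by omega, fun hle => h3 ((bridgeM θ hθ i h1 h2).mp hle)⟩
  -- main argument
  intro ζ
  obtain ⟨η, hηval⟩ : ∃ η : Module.Dual ℝ g, ∀ z : g, η z = ξ z + (ζ (p z) - ξ (p z)) :=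
    ⟨ξ + (ζ - ξ).comp p, fun z => by simp⟩
  have hξ' : ∀ x ∈ m.toSubmodule, ∀ y ∈ n.toSubmodule, ξ ⁅x, y⁆ = 0 :=
    fun x hx y hy => hξ x hx y hy
  have hη_n : ∀ z ∈ n.toSubmodule, η z = ξ z := by
    intro z hz; rw [hηval, hpn z hz]; simp
  have hη_m : ∀ z ∈ m.toSubmodule, η z = ζ z := by
    intro z hz; rw [hηval, hpm z hz]; ring
  have hη' : ∀ x ∈ m.toSubmodule, ∀ y ∈ n.toSubmodule, η ⁅x, y⁆ = 0 := by
    intro x hx y hy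
    rw [hη_n _ (hlie_n x y hy)]
    exact hξ' x hx y hy
  have hEqN : isotropyOn n.toSubmodule η = isotropyOn n.toSubmodule ξ := by
    ext x
    constructor
    · rintro ⟨hxn, hx⟩
      exact ⟨hxn, fun y hy => by rw [← hη_n _ (hlie_n x y hy)]; exact hx y hy⟩
    · rintro ⟨hxn, hx⟩
      exact ⟨hxn, fun y hy => by rw [hη_n _ (hlie_n x y hy)]; exact hx y hy⟩
  have hEqM : isotropyOn m.toSubmodule η = isotropyOn m.toSubmodule ζ := by
    ext x
    constructor
    · rintro ⟨hxm, hx⟩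
      exact ⟨hxm, fun y hy => by rw [← hη_m _ (hlie_m x y hxm hy)]; exact hx y hy⟩
    · rintro ⟨hxm, hx⟩
      exact ⟨hxm, fun y hy => by rw [hη_m _ (hlie_m x y hxm hy)]; exact hx y hy⟩
  have hdξ := decomp ξ hξ'
  have hdη := decomp η hη'
  rw [hEqN, hEqM] at hdη
  have hAbound : ∀ a ∈ jumpSetGen gs k (isotropyOn n.toSubmodule ξ), a ≤ k := fun a ha => ha.2.1
  have hBbound : ∀ I : Submodule ℝ g, ∀ b ∈ jumpSetGen ms (d - k) I, 1 ≤ b := fun I b hb => hb.1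
  rcases hJg η with heq | hlt
  · left
    rw [hdξ, hdη] at heq
    exact union_shift_eq k hAbound (hBbound _) (hBbound _) heq
  · right
    rw [hdξ, hdη] at hlt
    unfold precRel at hlt ⊢
    rw [union_shift_diff k hAbound (hBbound _) (hBbound _),
        union_shift_diff k hAbound (hBbound _) (hBbound _),
        eMin_shift, eMin_shift] at hlt
    exact lt_of_add_lt_add_left hlt
end

section
/- Let g = m ⋉ n be a nilpotent real Lie algebra, where m has 1-dimensional center Z(m) and generic flat coadjoint orbits. Fix a Jordan–Hölder series of g passing through n at index k = dim n, with jump sets J(·) on g, on n (truncated series) and on m (projected series), and e(g), e(n), e(m) the corresponding ≺-minima. Assume X ⊆ n* is a subset such that: (a) X is Ad*-invariant in n* and J(ξ) = e(n) for every ξ ∈ X; (b) there are a Lie subalgebra s ⊆ n and a linear subspace V ⊆ n with n = s ⊕ V, [m, s] = {0}, [m, n] ⊆ V, and for every ξ ∈ X there exists η in the coadjoint orbit of ξ in n* with V ⊆ ker η and n(η) = s. Let X̃ ⊆ g* be any Ad*-invariant subset such that J(ξ̃) = e(g) and ξ̃|_n ∈ X for every ξ̃ ∈ X̃. Then for every ξ̃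 ∈ X̃ and every hyperplane V_0 ⊂ m with Z(m) + V_0 = m, there exists ξ̃_0 in the coadjoint orbit of ξ̃ in g* such that V_0 + V ⊆ ker ξ̃_0, m(ξ̃_0|m) = Z(m), n(ξ̃_0|n) = s, and g(ξ̃_0) = Z(m) ⊕ s. -/
open Module

/-- The center `Z(W) = {x ∈ W : [x,y] = 0 for all y ∈ W}` of a subalgebra `W`. -/
noncomputable def centerIn {g : Type*} [LieRing g] [LieAlgebra ℝ g]
    (W : Submodule ℝ g) : Submodule ℝ g where
  carrier := {x | x ∈ W ∧ ∀ y ∈ W, ⁅x, y⁆ = 0}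
  add_mem' := by
    intro a b ha hb
    exact ⟨W.add_mem ha.1 hb.1, fun y hy => by simp [add_lie, ha.2 y hy, hb.2 y hy]⟩
  zero_mem' := ⟨W.zero_mem, fun y hy => by simp⟩
  smul_mem' := by
    intro c a ha
    exact ⟨W.smul_mem c ha.1, fun y hy => by simp [smul_lie, ha.2 y hy]⟩

/-- `exp (ad x)`, as a finite sum; since `ad x` is a nilpotent endomorphism of
index at most `finrank ℝ g`, this finite sum equals the exponential series. -/
noncomputable def expAd {g : Type*} [LieRing g] [LieAlgebra ℝ g] (x : g) : g →ₗ[ℝ] g :=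
  ∑ k ∈ Finset.range (Module.finrank ℝ g + 1),
    ((k.factorial : ℝ)⁻¹) • ((LieAlgebra.ad ℝ g x : Module.End ℝ g) ^ k)

/-- `η` lies in the coadjoint orbit of `ξ`, i.e. `η = ξ ∘ exp(-ad x₁) ∘ ⋯ ∘ exp(-ad xᵣ)`
for some `x₁, …, xᵣ`. -/
noncomputable def coOrbit {g : Type*} [LieRing g] [LieAlgebra ℝ g]
    (ξ η : Module.Dual ℝ g) : Prop :=
  ∃ l : List g, η = l.foldl (fun ζ x => ζ.comp (expAd (-x))) ξ

/-- `η` represents an element of the coadjoint orbit of `ξ|_W` in `W*`, for a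
Lie subalgebra `W`: its restriction to `W` is obtained from that of `ξ` by
composing with products of `exp(-ad y)`, `y ∈ W` (note that each such
`exp(-ad y)` leaves `W` invariant when `W` is a subalgebra resp. an ideal). -/
noncomputable def coOrbitOn {g : Type*} [LieRing g] [LieAlgebra ℝ g]
    (W : Submodule ℝ g) (ξ η : Module.Dual ℝ g) : Prop :=
  ∃ l : List g, (∀ y ∈ l, y ∈ W) ∧
    ∀ z ∈ W, η z = (l.foldl (fun ζ x => ζ.comp (expAd (-x))) ξ) z

section AuxLinear

open Module

variable {E : Type*} [AddCommGroup E] [Module ℝ E] [FiniteDimensional ℝ E]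

lemma aux_finrank_sup_span_singleton_le (A : Submodule ℝ E) (u : E) :
    finrank ℝ ↥(A ⊔ Submodule.span ℝ {u}) ≤ finrank ℝ A + 1 := by
  have h := Submodule.finrank_sup_add_finrank_inf_eq A (Submodule.span ℝ {u})
  have h2 : finrank ℝ ↥(Submodule.span ℝ ({u} : Set E)) ≤ 1 := by
    simpa using finrank_span_le_card ({u} : Set E)
  omega

lemma aux_exists_sup_span_eq {A B : Submodule ℝ E} (hle : A ≤ B) (hne : A ≠ B)
    (hd : finrank ℝ B ≤ finrank ℝ A + 1) :
    ∃ u, B = A ⊔ Submodule.span ℝ {u} := by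
  obtain ⟨u, huB, huA⟩ := SetLike.exists_of_lt (lt_of_le_of_ne hle hne)
  refine ⟨u, ?_⟩
  have hle2 : A ⊔ Submodule.span ℝ {u} ≤ B := by
    refine sup_le hle ?_
    rwa [Submodule.span_singleton_le_iff_mem]
  have hlt : A < A ⊔ Submodule.span ℝ {u} := by
    refine lt_of_le_of_ne le_sup_left ?_
    intro hEq
    exact huA (hEq ▸ (le_sup_right : Submodule.span ℝ {u} ≤ A ⊔ Submodule.span ℝ {u})
      (Submodule.mem_span_singleton_self u))
  have h1 : finrank ℝ A < finrank ℝ ↥(A ⊔ Submodule.span ℝ {u}) :=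
    Submodule.finrank_lt_finrank_of_lt hlt
  have h2 : finrank ℝ ↥(A ⊔ Submodule.span ℝ {u}) ≤ finrank ℝ B :=
    Submodule.finrank_mono hle2
  exact (Submodule.eq_of_le_of_finrank_eq hle2 (by
    have := aux_finrank_sup_span_singleton_le A u
    omega)).symm

open Classical in
lemma aux_counting_jump (gs : ℕ → Submodule ℝ E) (d : ℕ)
    (hgs0 : gs 0 = ⊥) (hgsd : gs d = ⊤) (hd : finrank ℝ E = d)
    (hchain : ∀ j < d, gs j ≤ gs (j + 1))
    (hdim : ∀ j ≤ d, finrank ℝ (gs j) = j)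
    (I : Submodule ℝ E) :
    finrank ℝ I + ((Finset.Icc 1 d).filter (fun j => ¬ gs j ≤ gs (j - 1) ⊔ I)).card = d := by
  have key : ∀ t, t ≤ d → finrank ℝ ↥(gs t ⊔ I) =
      finrank ℝ I + ((Finset.Icc 1 t).filter (fun j => ¬ gs j ≤ gs (j - 1) ⊔ I)).card := by
    intro t
    induction t with
    | zero => intro _; rw [hgs0, bot_sup_eq]; simp
    | succ t ih =>
      intro ht
      have ih' := ih (by omega)
      have hstep : ∃ u, gs (t + 1) = gs t ⊔ Submodule.span ℝ {u} := by
        refine aux_exists_sup_span_eq (hchain t (by omega)) ?_ ?_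
        · intro hEq
          have h1 := hdim t (by omega)
          have h2 := hdim (t + 1) ht
          rw [hEq] at h1
          omega
        · rw [hdim t (by omega), hdim (t + 1) ht]
      obtain ⟨u, hu⟩ := hstep
      have hIcc : Finset.Icc 1 (t + 1) = insert (t + 1) (Finset.Icc 1 t) := by
        ext j; simp [Finset.mem_Icc, Finset.mem_insert]; omega
      have hnotmem : (t + 1) ∉ Finset.Icc 1 t := by simp
      rw [hIcc, Finset.filter_insert]
      have hsub : t + 1 - 1 = t := by omega
      by_cases hP : ¬ gs (t + 1) ≤ gs (t + 1 - 1) ⊔ I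
      · rw [if_pos hP, Finset.card_insert_of_notMem (fun h => hnotmem (Finset.mem_of_mem_filter _ h))]
        rw [hsub] at hP
        have hle : finrank ℝ ↥(gs (t + 1) ⊔ I) ≤ finrank ℝ ↥(gs t ⊔ I) + 1 := by
          have : gs (t + 1) ⊔ I = (gs t ⊔ I) ⊔ Submodule.span ℝ {u} := by
            rw [hu]; rw [sup_assoc, sup_assoc, sup_comm (Submodule.span ℝ {u}) I]
          rw [this]
          exact aux_finrank_sup_span_singleton_le _ u
        have hgt : finrank ℝ ↥(gs t ⊔ I) < finrank ℝ ↥(gs (t + 1) ⊔ I) := by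
          refine Submodule.finrank_lt_finrank_of_lt (lt_of_le_of_ne
            (sup_le_sup_right (hchain t (by omega)) I) ?_)
          intro hEq
          exact hP (hEq ▸ le_sup_left)
        omega
      · rw [if_neg hP]
        push_neg at hP
        rw [hsub] at hP
        have : gs (t + 1) ⊔ I = gs t ⊔ I := by
          exact le_antisymm (sup_le hP le_sup_right)
            (sup_le_sup_right (hchain t (by omega)) I)
        rw [this, ih']
  have := key d le_rfl
  rw [hgsd, top_sup_eq, finrank_top, hd] at this
  omega

lemma aux_perp_exists (b : E →ₗ[ℝ] Module.Dual ℝ E)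
    (hskew : ∀ x y, b x y = - b y x)
    (W : Submodule ℝ E) (hRW : LinearMap.ker b ≤ W)
    (v : E) (hv : v ∉ W) :
    ∃ x : E, (∀ w ∈ W, b x w = 0) ∧ b x v = 1 := by
  have hle : LinearMap.range b ≤ (LinearMap.ker b).dualAnnihilator := by
    rintro φ ⟨x, rfl⟩
    rw [Submodule.mem_dualAnnihilator]
    intro w hw
    rw [hskew x w, LinearMap.mem_ker.mp hw]
    simp
  have hrange : LinearMap.range b = (LinearMap.ker b).dualAnnihilator := by
    apply (Submodule.eq_of_le_of_finrank_eq hle ?_)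
    have h1 := LinearMap.finrank_range_add_finrank_ker b
    have h3 := Submodule.finrank_quotient_add_finrank (LinearMap.ker b)
    have h2 : finrank ℝ ↥((LinearMap.ker b).dualAnnihilator)
        = finrank ℝ (E ⧸ LinearMap.ker b) :=
      (LinearEquiv.finrank_eq (Subspace.quotEquivAnnihilator (LinearMap.ker b))).symm
    omega
  have hvq : (Submodule.Quotient.mk v : E ⧸ W) ≠ 0 := by
    simpa [Submodule.Quotient.mk_eq_zero] using hv
  obtain ⟨f, hf⟩ : ∃ f : Module.Dual ℝ (E ⧸ W), f (Submodule.Quotient.mk v) ≠ 0 := by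
    by_contra h
    push_neg at h
    exact hvq ((Module.forall_dual_apply_eq_zero_iff ℝ _).mp h)
  set c := f (Submodule.Quotient.mk v) with hc
  set φ : Module.Dual ℝ E := c⁻¹ • (f.comp W.mkQ) with hφ
  have hφW : ∀ w ∈ W, φ w = 0 := by
    intro w hw
    have : W.mkQ w = 0 := (Submodule.Quotient.mk_eq_zero W).mpr hw
    simp [hφ, LinearMap.comp_apply, this]
  have hφv : φ v = 1 := by
    simp only [hφ, LinearMap.smul_apply, LinearMap.comp_apply, Submodule.mkQ_apply, smul_eq_mul]
    exact inv_mul_cancel₀ hf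
  have hφmem : φ ∈ (LinearMap.ker b).dualAnnihilator := by
    rw [Submodule.mem_dualAnnihilator]
    exact fun w hw => hφW w (hRW hw)
  rw [← hrange] at hφmem
  obtain ⟨x, hx⟩ := hφmem
  exact ⟨x, fun w hw => by rw [hx]; exact hφW w hw, by rw [hx]; exact hφv⟩

end AuxLinear

section AuxLie

open Module

variable {g : Type*} [LieRing g] [LieAlgebra ℝ g]

lemma aux_mem_isotropy {ξ : Module.Dual ℝ g} {x : g} :
    x ∈ isotropy ξ ↔ ∀ y : g, ξ ⁅x, y⁆ = 0 := Iff.rfl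

lemma aux_mem_isotropyOn {W : Submodule ℝ g} {ξ : Module.Dual ℝ g} {x : g} :
    x ∈ isotropyOn W ξ ↔ x ∈ W ∧ ∀ y ∈ W, ξ ⁅x, y⁆ = 0 := Iff.rfl

lemma aux_mem_centerIn {W : Submodule ℝ g} {x : g} :
    x ∈ centerIn W ↔ x ∈ W ∧ ∀ y ∈ W, ⁅x, y⁆ = 0 := Iff.rfl

lemma aux_centerIn_le_isotropyOn (W : Submodule ℝ g) (ξ : Module.Dual ℝ g) :
    centerIn W ≤ isotropyOn W ξ := by
  intro x hx
  exact ⟨hx.1, fun y hy => by rw [hx.2 y hy]; simp⟩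

lemma aux_isotropyOn_congr {W : Submodule ℝ g} {ξ η : Module.Dual ℝ g}
    (hW : ∀ x ∈ W, ∀ y ∈ W, ⁅x, y⁆ ∈ W) (h : ∀ z ∈ W, ξ z = η z) :
    isotropyOn W ξ = isotropyOn W η := by
  ext x
  constructor <;> intro hx <;>
    refine ⟨hx.1, fun y hy => ?_⟩
  · rw [← h _ (hW x hx.1 y hy)]; exact hx.2 y hy
  · rw [h _ (hW x hx.1 y hy)]; exact hx.2 y hy

lemma aux_expAd_apply (x w : g) :
    expAd x w = ∑ k ∈ Finset.range (Module.finrank ℝ g + 1),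
      ((k.factorial : ℝ)⁻¹) • (((LieAlgebra.ad ℝ g x : Module.End ℝ g) ^ k) w) := by
  simp [expAd, LinearMap.sum_apply, LinearMap.smul_apply]

lemma aux_expAd_apply_sub_mem {V : Submodule ℝ g} {x w : g}
    (h : ∀ t : ℕ, ((LieAlgebra.ad ℝ g x : Module.End ℝ g) ^ (t + 1)) w ∈ V) :
    expAd x w - w ∈ V := by
  rw [aux_expAd_apply, Finset.sum_range_succ']
  simp only [pow_zero, Nat.factorial_zero, Nat.cast_one, inv_one, one_smul,
    Module.End.one_apply]
  rw [add_sub_cancel_right]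
  exact Submodule.sum_mem _ fun t _ => Submodule.smul_mem _ _ (h t)

lemma aux_expAd_eval_eq {η : Module.Dual ℝ g} {x w : g}
    (h : ∀ t : ℕ, η (((LieAlgebra.ad ℝ g x : Module.End ℝ g) ^ (t + 1)) w) = 0) :
    η (expAd x w) = η w := by
  rw [aux_expAd_apply, map_sum, Finset.sum_range_succ']
  simp only [map_smul, h, smul_zero, Finset.sum_const_zero, zero_add,
    pow_zero, Nat.factorial_zero, Nat.cast_one, inv_one, one_smul,
    Module.End.one_apply]

lemma aux_expAd_eval_eq' (hD : 1 ≤ Module.finrank ℝ g) {η : Module.Dual ℝ g} {x w : g}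
    (h : ∀ t : ℕ, η (((LieAlgebra.ad ℝ g x : Module.End ℝ g) ^ (t + 2)) w) = 0) :
    η (expAd x w) = η w + η ⁅x, w⁆ := by
  obtain ⟨D, hDe⟩ : ∃ D, Module.finrank ℝ g = D + 1 :=
    ⟨Module.finrank ℝ g - 1, by omega⟩
  rw [aux_expAd_apply, map_sum, hDe, Finset.sum_range_succ', Finset.sum_range_succ']
  simp only [map_smul, h, smul_zero, Finset.sum_const_zero, zero_add,
    pow_zero, pow_one, Nat.factorial_zero, Nat.factorial_one, Nat.cast_one, inv_one, one_smul,
    Module.End.one_apply, LieAlgebra.ad_apply]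
  ring

end AuxLie

/-- Lemma rec: subsets of `n*` (resp. of `g*`) are represented by
sets of functionals on `g` whose membership only depends on the restriction to `n`;
`e(g)`-minimality (resp. `e(n)`-minimality) of a jump set is expressed by
`≺`-comparison with the jump sets of all functionals. -/
theorem stmt14 {g : Type*} [LieRing g] [LieAlgebra ℝ g] [Module.Finite ℝ g]
    [LieRing.IsNilpotent g]
    -- the semidirect product decomposition g = m ⋉ n
    (n : LieIdeal ℝ g) (m : LieSubalgebra ℝ g)
    (hcompl : IsCompl m.toSubmodule n.toSubmodule)
    -- m has 1-dimensional center and generic flat coadjoint orbits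
    (hzm : Module.finrank ℝ (centerIn m.toSubmodule) = 1)
    (hflat : ∃ ζ : Module.Dual ℝ g, isotropyOn m.toSubmodule ζ = centerIn m.toSubmodule)
    -- the Jordan–Hölder series of g passing through n at index k
    (d k : ℕ) (hd : Module.finrank ℝ g = d) (hk : Module.finrank ℝ n.toSubmodule = k)
    (gs : ℕ → Submodule ℝ g)
    (hgs0 : gs 0 = ⊥) (hgsd : gs d = ⊤)
    (hchain : ∀ j < d, gs j ≤ gs (j + 1))
    (hdim : ∀ j ≤ d, Module.finrank ℝ (gs j) = j)
    (hbr : ∀ j, 1 ≤ j → j ≤ d → ∀ x : g, ∀ y ∈ gs j, ⁅x, y⁆ ∈ gs (j - 1))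
    (hgk : gs k = n.toSubmodule)
    -- the set X ⊆ n*
    (X : Set (Module.Dual ℝ g))
    (hXres : ∀ ξ η : Module.Dual ℝ g, (∀ z ∈ n, ξ z = η z) → (ξ ∈ X ↔ η ∈ X))
    -- (a) X is Ad*_N-invariant and J(ξ) = e(n) for every ξ ∈ X
    (hXinv : ∀ ξ ∈ X, ∀ y ∈ n, ξ.comp (expAd (-y)) ∈ X)
    (hXjump : ∀ ξ ∈ X, ∀ η : Module.Dual ℝ g,
      jumpSetGen gs k (isotropyOn n.toSubmodule ξ) =
          jumpSetGen gs k (isotropyOn n.toSubmodule η) ∨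
        precRel (jumpSetGen gs k (isotropyOn n.toSubmodule ξ))
          (jumpSetGen gs k (isotropyOn n.toSubmodule η)))
    -- (b) the subalgebra s and the subspace V
    (s V : Submodule ℝ g)
    (hs_sub : s ≤ n.toSubmodule) (hV_sub : V ≤ n.toSubmodule)
    (hs_lie : ∀ x ∈ s, ∀ y ∈ s, ⁅x, y⁆ ∈ s)
    (hsV_sup : s ⊔ V = n.toSubmodule) (hsV_disj : Disjoint s V)
    (hms : ∀ x ∈ m, ∀ y ∈ s, ⁅x, y⁆ = 0)
    (hmnV : ∀ x ∈ m, ∀ y ∈ n, ⁅x, y⁆ ∈ V)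
    (hXorb : ∀ ξ ∈ X, ∃ η : Module.Dual ℝ g, coOrbitOn n.toSubmodule ξ η ∧
      V ≤ LinearMap.ker η ∧ isotropyOn n.toSubmodule η = s)
    -- the set X̃ ⊆ g*: Ad*-invariant, J(ξ̃) = e(g) and ξ̃|_n ∈ X for ξ̃ ∈ X̃
    (Xt : Set (Module.Dual ℝ g))
    (hXtinv : ∀ ξ ∈ Xt, ∀ x : g, ξ.comp (expAd (-x)) ∈ Xt)
    (hXtjump : ∀ ξ ∈ Xt, ∀ η : Module.Dual ℝ g,
      jumpSetGen gs d (isotropy ξ) = jumpSetGen gs d (isotropy η) ∨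
        precRel (jumpSetGen gs d (isotropy ξ)) (jumpSetGen gs d (isotropy η)))
    (hXtres : ∀ ξ ∈ Xt, ξ ∈ X) :
    -- conclusion
    ∀ ξt ∈ Xt, ∀ V0 : Submodule ℝ g, V0 ≤ m.toSubmodule →
      Module.finrank ℝ V0 + 1 = Module.finrank ℝ m.toSubmodule →
      centerIn m.toSubmodule ⊔ V0 = m.toSubmodule →
      ∃ ξ0 : Module.Dual ℝ g, coOrbit ξt ξ0 ∧
        V0 ⊔ V ≤ LinearMap.ker ξ0 ∧
        isotropyOn m.toSubmodule ξ0 = centerIn m.toSubmodule ∧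
        isotropyOn n.toSubmodule ξ0 = s ∧
        isotropy ξ0 = centerIn m.toSubmodule ⊔ s := by
  classical
  intro ξt hξtXt V0 hV0m hV0rank hZV0
  haveI : FiniteDimensional ℝ g := inferInstance
  -- the projection p onto m along n
  set p' := (m.toSubmodule).projectionOnto n.toSubmodule hcompl with hp'
  set p : g →ₗ[ℝ] g := (m.toSubmodule).subtype.comp p' with hp
  have hpm : ∀ x ∈ m.toSubmodule, p x = x := by
    intro x hx
    simp only [hp, LinearMap.comp_apply]
    rw [hp', Submodule.projectionOnto_apply_left hcompl ⟨x, hx⟩]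
    rfl
  have hpn : ∀ x ∈ n.toSubmodule, p x = 0 := by
    intro x hx
    simp only [hp, LinearMap.comp_apply]
    rw [hp', Submodule.projectionOnto_apply_of_mem_right hcompl hx]
    rfl
  have hpmem : ∀ x : g, p x ∈ m.toSubmodule := by
    intro x
    simp only [hp, LinearMap.comp_apply]
    exact (p' x).2
  have hkerp : LinearMap.ker p = n.toSubmodule := by
    rw [hp, LinearMap.ker_comp, Submodule.ker_subtype, Submodule.comap_bot,
      hp', Submodule.ker_projectionOnto]
  have hsubp : ∀ x : g, x - p x ∈ n.toSubmodule := by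
    intro x
    rw [← hkerp, LinearMap.mem_ker, map_sub, hpm (p x) (hpmem x), sub_self]
  -- bracket-closure facts
  have hmclosed : ∀ x ∈ m.toSubmodule, ∀ y ∈ m.toSubmodule, ⁅x, y⁆ ∈ m.toSubmodule := by
    intro x hx y hy
    exact m.lie_mem hx hy
  have hnclosed : ∀ x ∈ n.toSubmodule, ∀ y ∈ n.toSubmodule, ⁅x, y⁆ ∈ n.toSubmodule := by
    intro x hx y hy
    exact n.lie_mem hy
  -- basic dimension facts
  have hkd : k ≤ d := by
    rw [← hk, ← hd]; exact Submodule.finrank_le n.toSubmodule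
  have hmn_rank : finrank ℝ m.toSubmodule + finrank ℝ n.toSubmodule = d := by
    have h2 := Submodule.finrank_sup_add_finrank_inf_eq m.toSubmodule n.toSubmodule
    rw [hcompl.sup_eq_top, hcompl.inf_eq_bot] at h2
    rw [finrank_top, finrank_bot, hd, add_zero] at h2
    omega
  have hm1 : 1 ≤ finrank ℝ m.toSubmodule := by
    rw [← hzm]
    exact Submodule.finrank_mono (fun x hx => hx.1)
  have hkd' : k < d := by omega
  have h1d : 1 ≤ d := by omega
  have h1g : 1 ≤ finrank ℝ g := by rw [hd]; exact h1d
  -- monotonicity of the flag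
  have hmono : ∀ i j, i ≤ j → j ≤ d → gs i ≤ gs j := by
    intro i j hij hjd
    induction j with
    | zero =>
      have : i = 0 := by omega
      rw [this]
    | succ j ih =>
      rcases Nat.lt_or_ge i (j + 1) with hlt | hge
      · exact le_trans (ih (by omega) (by omega)) (hchain j (by omega))
      · have : i = j + 1 := by omega
        rw [this]
  have hngs : ∀ j, k ≤ j → j ≤ d → n.toSubmodule ≤ gs j := by
    intro j h1 h2
    rw [← hgk]; exact hmono k j h1 h2
  -- the projected flag in m
  set ms : ℕ → Submodule ℝ g := fun j => Submodule.map p (gs (k + j)) with hmsdef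
  have hms_le_m : ∀ j, ms j ≤ m.toSubmodule := by
    rintro j x ⟨u, hu, rfl⟩
    exact hpmem u
  have hms0 : ms 0 = ⊥ := by
    rw [eq_bot_iff]
    rintro x ⟨u, hu, rfl⟩
    rw [Nat.add_zero, hgk] at hu
    rw [Submodule.mem_bot]
    exact hpn u hu
  have hmsq : ms (d - k) = m.toSubmodule := by
    refine le_antisymm (hms_le_m _) ?_
    intro x hx
    have : k + (d - k) = d := by omega
    rw [hmsdef]
    simp only [this, hgsd]
    exact ⟨x, trivial, hpm x hx⟩
  have hms_mono : ∀ i j, i ≤ j → k + j ≤ d → ms i ≤ ms j := by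
    intro i j hij hjd
    exact Submodule.map_mono (hmono (k + i) (k + j) (by omega) hjd)
  -- bracket property of the projected flag
  have hMbr : ∀ j, 1 ≤ j → k + j ≤ d → ∀ x ∈ m.toSubmodule, ∀ w ∈ ms j,
      ⁅x, w⁆ ∈ ms (j - 1) := by
    intro j hj hjd x hx w hw
    obtain ⟨u, hu, rfl⟩ := hw
    have h1 : ⁅x, u⁆ ∈ gs (k + j - 1) := hbr (k + j) (by omega) hjd x u hu
    have h2 : ⁅x, u - p u⁆ ∈ V := hmnV x hx (u - p u) (hsubp u)
    have h2n : ⁅x, u - p u⁆ ∈ n.toSubmodule := hV_sub h2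
    have hbexp : ⁅x, p u⁆ = ⁅x, u⁆ - ⁅x, u - p u⁆ := by
      rw [← lie_sub, sub_sub_cancel]
    have hxm : ⁅x, p u⁆ ∈ m.toSubmodule := hmclosed x hx (p u) (hpmem u)
    have hfin : ⁅x, p u⁆ = p ⁅x, u⁆ := by
      rw [← hpm _ hxm, hbexp, map_sub, hpn _ h2n, sub_zero]
    rw [hfin]
    have hidx : k + j - 1 = k + (j - 1) := by omega
    exact ⟨⁅x, u⁆, by rw [← hidx]; exact h1, rfl⟩
  -- ms 1 is the center of m
  have hms1_le : ms 1 ≤ centerIn m.toSubmodule := by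
    intro w hw
    refine ⟨hms_le_m 1 hw, fun y hy => ?_⟩
    have h := hMbr 1 le_rfl (by omega) y hy w hw
    rw [show (1:ℕ) - 1 = 0 from rfl, hms0] at h
    have h0 : ⁅y, w⁆ = 0 := (Submodule.mem_bot ℝ).mp h
    rw [← lie_skew, h0, neg_zero]
  have hms1rank : finrank ℝ ↥(ms 1) = 1 := by
    set W := gs (k + 1) with hW
    set f' : ↥W →ₗ[ℝ] g := p.comp W.subtype with hf'
    have hrange : LinearMap.range f' = ms 1 := by
      rw [hf', LinearMap.range_comp, Submodule.range_subtype]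
    have hker : LinearMap.ker f' = Submodule.comap W.subtype n.toSubmodule := by
      rw [hf', LinearMap.ker_comp, hkerp]
    have hnW : n.toSubmodule ≤ W := hngs (k + 1) (by omega) (by omega)
    have hkerrank : finrank ℝ ↥(LinearMap.ker f') = k := by
      rw [hker, ← hk]
      exact LinearEquiv.finrank_eq (Submodule.comapSubtypeEquivOfLe hnW)
    have hrn := LinearMap.finrank_range_add_finrank_ker f'
    rw [hrange, hkerrank] at hrn
    have hWrank : finrank ℝ ↥W = k + 1 := hdim (k + 1) (by omega)
    rw [hWrank] at hrn
    omega
  have hms1 : ms 1 = centerIn m.toSubmodule :=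
    Submodule.eq_of_le_of_finrank_eq hms1_le (by rw [hms1rank, hzm])
  -- the formula g(η) = m(η|m) ⊔ s
  have hC : ∀ η : Module.Dual ℝ g, V ≤ LinearMap.ker η → isotropyOn n.toSubmodule η = s →
      isotropy η = isotropyOn m.toSubmodule η ⊔ s := by
    intro η hVker hisoN
    have hηV : ∀ v ∈ V, η v = 0 := fun v hv => LinearMap.mem_ker.mp (hVker hv)
    have hsiso : ∀ b ∈ s, ∀ z ∈ n.toSubmodule, η ⁅b, z⁆ = 0 := by
      intro b hb z hz
      have hbmem : b ∈ isotropyOn n.toSubmodule η := by rw [hisoN]; exact hb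
      exact hbmem.2 z hz
    ext x
    constructor
    · intro hx
      have hx' : ∀ y : g, η ⁅x, y⁆ = 0 := aux_mem_isotropy.mp hx
      have hxn_mem : x - p x ∈ s := by
        rw [← hisoN]
        refine ⟨hsubp x, fun z hz => ?_⟩
        have h1 : η ⁅x, z⁆ = 0 := hx' z
        have h2 : η ⁅p x, z⁆ = 0 := hηV _ (hmnV (p x) (hpmem x) z hz)
        rw [sub_lie, map_sub, h1, h2, sub_zero]
      have hxm_mem : p x ∈ isotropyOn m.toSubmodule η := by
        refine ⟨hpmem x, fun y hy => ?_⟩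
        have h2 : ⁅x - p x, y⁆ = 0 := by
          rw [← lie_skew, hms y hy (x - p x) hxn_mem, neg_zero]
        have h3 : ⁅p x, y⁆ = ⁅x, y⁆ - ⁅x - p x, y⁆ := by rw [sub_lie]; abel
        rw [h3, h2, sub_zero]
        exact hx' y
      have hxeq : p x + (x - p x) = x := by abel
      have := Submodule.add_mem_sup hxm_mem hxn_mem
      rwa [hxeq] at this
    · intro hx
      obtain ⟨a, ha, b, hb, rfl⟩ := Submodule.mem_sup.mp hx
      intro y
      have hy1 : η ⁅a, y⁆ = 0 := by
        have hdec : ⁅a, y⁆ = ⁅a, p y⁆ + ⁅a, y - p y⁆ := by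
          rw [← lie_add]
          congr 1
          abel
        rw [hdec, map_add, ha.2 (p y) (hpmem y),
          hηV _ (hmnV a ha.1 (y - p y) (hsubp y)), add_zero]
      have hy2 : η ⁅b, y⁆ = 0 := by
        have h0 : ⁅b, p y⁆ = 0 := by
          rw [← lie_skew, hms (p y) (hpmem y) b hb, neg_zero]
        have hdec : ⁅b, y⁆ = ⁅b, p y⁆ + ⁅b, y - p y⁆ := by
          rw [← lie_add]
          congr 1
          abel
        rw [hdec, h0, zero_add]
        exact hsiso b hb (y - p y) (hsubp y)
      rw [add_lie, map_add, hy1, hy2, add_zero]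
  -- transfer of isotropyOn n along functionals agreeing on n
  have hntrans : ∀ η η' : Module.Dual ℝ g, (∀ z ∈ n.toSubmodule, η z = η' z) →
      isotropyOn n.toSubmodule η = isotropyOn n.toSubmodule η' :=
    fun η η' h => aux_isotropyOn_congr hnclosed h
  -- ad-powers of m-elements push n into V
  have hadV : ∀ x ∈ m.toSubmodule, ∀ z ∈ n.toSubmodule, ∀ t : ℕ,
      ((LieAlgebra.ad ℝ g (-x) : Module.End ℝ g) ^ (t + 1)) z ∈ V := by
    intro x hx z hz t
    induction t with
    | zero =>
      simp only [zero_add, pow_one, LieAlgebra.ad_apply]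
      rw [neg_lie]
      exact Submodule.neg_mem _ (hmnV x hx z hz)
    | succ t ih =>
      rw [pow_succ', Module.End.mul_apply]
      set w := ((LieAlgebra.ad ℝ g (-x) : Module.End ℝ g) ^ (t + 1)) z with hwdef
      have hwn : w ∈ n.toSubmodule := hV_sub ih
      simp only [LieAlgebra.ad_apply]
      rw [neg_lie]
      exact Submodule.neg_mem _ (hmnV x hx w hwn)
  have hnval : ∀ η : Module.Dual ℝ g, V ≤ LinearMap.ker η → ∀ x ∈ m.toSubmodule,
      ∀ z ∈ n.toSubmodule, η (expAd (-x) z) = η z := by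
    intro η hVker x hx z hz
    exact aux_expAd_eval_eq (fun t => LinearMap.mem_ker.mp (hVker (hadV x hx z hz t)))
  -- Lemma A: genericity forces m-isotropy = center
  have hA : ∀ η ∈ Xt, V ≤ LinearMap.ker η → isotropyOn n.toSubmodule η = s →
      isotropyOn m.toSubmodule η = centerIn m.toSubmodule := by
    intro η hηXt hVker hisoN
    by_contra hne
    have hge : centerIn m.toSubmodule ≤ isotropyOn m.toSubmodule η :=
      aux_centerIn_le_isotropyOn _ _
    have hlt : centerIn m.toSubmodule < isotropyOn m.toSubmodule η :=
      lt_of_le_of_ne hge (fun h => hne h.symm)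
    obtain ⟨ζ, hζ⟩ := hflat
    set ζ' : Module.Dual ℝ g := ζ.comp p + η.comp (LinearMap.id - p) with hζ'def
    have hζ'm : ∀ y ∈ m.toSubmodule, ζ' y = ζ y := by
      intro y hy
      simp only [hζ'def, LinearMap.add_apply, LinearMap.comp_apply, LinearMap.sub_apply,
        LinearMap.id_apply]
      rw [hpm y hy, sub_self, map_zero, add_zero]
    have hζ'n : ∀ z ∈ n.toSubmodule, ζ' z = η z := by
      intro z hz
      simp only [hζ'def, LinearMap.add_apply, LinearMap.comp_apply, LinearMap.sub_apply,
        LinearMap.id_apply]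
      rw [hpn z hz, map_zero, sub_zero, zero_add]
    have him : isotropyOn m.toSubmodule ζ' = centerIn m.toSubmodule := by
      rw [aux_isotropyOn_congr hmclosed hζ'm]
      exact hζ
    have hin : isotropyOn n.toSubmodule ζ' = s := by
      rw [hntrans ζ' η hζ'n]
      exact hisoN
    have hkerζ' : V ≤ LinearMap.ker ζ' := by
      intro v hv
      rw [LinearMap.mem_ker, hζ'n v (hV_sub hv)]
      exact LinearMap.mem_ker.mp (hVker hv)
    have hiso1 : isotropy η = isotropyOn m.toSubmodule η ⊔ s := hC η hVker hisoN
    have hiso2 : isotropy ζ' = centerIn m.toSubmodule ⊔ s := by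
      rw [hC ζ' hkerζ' hin, him]
    have hdisjrank : ∀ A : Submodule ℝ g, A ≤ m.toSubmodule →
        finrank ℝ ↥(A ⊔ s) = finrank ℝ ↥A + finrank ℝ ↥s := by
      intro A hA'
      have hinf : A ⊓ s = ⊥ := by
        rw [eq_bot_iff]
        intro x hx
        have h1 : x ∈ m.toSubmodule ⊓ n.toSubmodule :=
          ⟨hA' hx.1, hs_sub hx.2⟩
        rw [hcompl.inf_eq_bot] at h1
        exact h1
      have h2 := Submodule.finrank_sup_add_finrank_inf_eq A s
      rw [hinf, finrank_bot, add_zero] at h2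
      exact h2
    have hrank_lt : finrank ℝ ↥(isotropy ζ') < finrank ℝ ↥(isotropy η) := by
      rw [hiso1, hiso2,
        hdisjrank (isotropyOn m.toSubmodule η) (fun x hx => hx.1),
        hdisjrank (centerIn m.toSubmodule) (fun x hx => hx.1)]
      have := Submodule.finrank_lt_finrank_of_lt hlt
      omega
    have hsubJ : jumpSetGen gs d (isotropy η) ⊆ jumpSetGen gs d (isotropy ζ') := by
      intro j hj
      obtain ⟨hj1, hj2, hj3⟩ := hj
      refine ⟨hj1, hj2, fun hle => hj3 (hle.trans ?_)⟩
      refine sup_le_sup_left ?_ _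
      rw [hiso1, hiso2]
      exact sup_le_sup_right hlt.le s
    rcases hXtjump η hηXt ζ' with heq | hpre
    · have hfil : (Finset.Icc 1 d).filter (fun j => ¬ gs j ≤ gs (j - 1) ⊔ isotropy η) =
          (Finset.Icc 1 d).filter (fun j => ¬ gs j ≤ gs (j - 1) ⊔ isotropy ζ') := by
        apply Finset.filter_congr
        intro j hj
        rw [Finset.mem_Icc] at hj
        constructor
        · intro h
          have hmem : j ∈ jumpSetGen gs d (isotropy η) := ⟨hj.1, hj.2, h⟩
          rw [heq] at hmem
          exact hmem.2.2
        · intro h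
          have hmem : j ∈ jumpSetGen gs d (isotropy ζ') := ⟨hj.1, hj.2, h⟩
          rw [← heq] at hmem
          exact hmem.2.2
      have c1 := aux_counting_jump gs d hgs0 hgsd hd hchain hdim (isotropy η)
      have c2 := aux_counting_jump gs d hgs0 hgsd hd hchain hdim (isotropy ζ')
      rw [hfil] at c1
      omega
    · unfold precRel at hpre
      rw [Set.diff_eq_empty.mpr hsubJ] at hpre
      unfold eMin at hpre
      rw [Set.image_empty, sInf_empty] at hpre
      exact not_top_lt hpre
  -- folding preserves Xt
  have hfold : ∀ (l : List g) (η : Module.Dual ℝ g), η ∈ Xt →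
      l.foldl (fun ζ x => ζ.comp (expAd (-x))) η ∈ Xt := by
    intro l
    induction l with
    | nil => intro η hη; simpa using hη
    | cons a l ih =>
      intro η hη
      exact ih _ (hXtinv η hη a)
  -- the starting point ξ1
  have hξtX : ξt ∈ X := hXtres ξt hξtXt
  obtain ⟨ηo, ⟨l, hlmem, hlval⟩, hVo, hisoo⟩ := hXorb ξt hξtX
  set ξ1 : Module.Dual ℝ g := l.foldl (fun ζ x => ζ.comp (expAd (-x))) ξt with hξ1def
  have hξ1Xt : ξ1 ∈ Xt := hfold l ξt hξtXt
  have hξ1n : ∀ z ∈ n.toSubmodule, ξ1 z = ηo z := fun z hz => (hlval z hz).symm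
  have hVξ1 : V ≤ LinearMap.ker ξ1 := by
    intro v hv
    rw [LinearMap.mem_ker, hξ1n v (hV_sub hv)]
    exact LinearMap.mem_ker.mp (hVo hv)
  have hisoξ1 : isotropyOn n.toSubmodule ξ1 = s := by
    rw [hntrans ξ1 ηo hξ1n]
    exact hisoo
  -- disjointness of V0 and the center
  have hdisjV0Z : V0 ⊓ centerIn m.toSubmodule = ⊥ := by
    have h := Submodule.finrank_sup_add_finrank_inf_eq (centerIn m.toSubmodule) V0
    rw [hZV0, hzm] at h
    have h0 : finrank ℝ ↥(centerIn m.toSubmodule ⊓ V0) = 0 := by omega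
    rw [inf_comm] at h0
    exact Submodule.finrank_eq_zero.mp h0
  -- main induction along the flag of m
  have key : ∀ j, j ≤ d - k → ∃ η : Module.Dual ℝ g, coOrbit ξt η ∧ η ∈ Xt ∧
      V ≤ LinearMap.ker η ∧ isotropyOn n.toSubmodule η = s ∧
      ∀ w ∈ V0 ⊓ ms j, η w = 0 := by
    intro j
    induction j with
    | zero =>
      intro _
      refine ⟨ξ1, ⟨l, hξ1def⟩, hξ1Xt, hVξ1, hisoξ1, ?_⟩
      intro w hw
      have hw2 : w ∈ ms 0 := (Submodule.mem_inf.mp hw).2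
      rw [hms0] at hw2
      rw [(Submodule.mem_bot ℝ).mp hw2, map_zero]
    | succ j ih =>
      intro hj1
      obtain ⟨η, hcoη, hηXt, hηV, hηiso, hηvan⟩ := ih (by omega)
      by_cases hcase : V0 ⊓ ms (j + 1) ≤ ms j
      · refine ⟨η, hcoη, hηXt, hηV, hηiso, fun w hw => ?_⟩
        exact hηvan w (Submodule.mem_inf.mpr ⟨(Submodule.mem_inf.mp hw).1, hcase hw⟩)
      · obtain ⟨v, hvmem, hvnot⟩ := SetLike.not_le_iff_exists.mp hcase
        have hvV0 : v ∈ V0 := (Submodule.mem_inf.mp hvmem).1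
        have hvms : v ∈ ms (j + 1) := (Submodule.mem_inf.mp hvmem).2
        rcases Nat.eq_zero_or_pos j with rfl | hjpos
        · exfalso
          have hvc : v ∈ V0 ⊓ centerIn m.toSubmodule := by
            rw [← hms1]
            exact Submodule.mem_inf.mpr ⟨hvV0, hvms⟩
          rw [hdisjV0Z] at hvc
          apply hvnot
          rw [hms0, (Submodule.mem_bot ℝ).mp hvc]
          exact Submodule.zero_mem _
        · have hkj1 : k + (j + 1) ≤ d := by omega
          have hisoM : isotropyOn m.toSubmodule η = centerIn m.toSubmodule :=
            hA η hηXt hηV hηiso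
          have hvm : v ∈ m.toSubmodule := hms_le_m (j + 1) hvms
          set b : ↥(m.toSubmodule) →ₗ[ℝ] Module.Dual ℝ ↥(m.toSubmodule) :=
            LinearMap.mk₂ ℝ (fun x y : ↥(m.toSubmodule) => η ⁅(x : g), (y : g)⁆)
              (by intro x x' y; simp [add_lie])
              (by intro cc x y; simp [smul_lie])
              (by intro x y y'; simp [lie_add])
              (by intro x cc y; simp [lie_smul]) with hbdef
          have hskewb : ∀ x y : ↥(m.toSubmodule), b x y = - b y x := by
            intro x y
            simp only [hbdef, LinearMap.mk₂_apply]
            rw [← lie_skew, map_neg]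
          set Wm : Submodule ℝ ↥(m.toSubmodule) :=
            Submodule.comap (m.toSubmodule).subtype (ms j) with hWmdef
          have hkerb : LinearMap.ker b ≤ Wm := by
            intro x hx
            have hxiso : (x : g) ∈ isotropyOn m.toSubmodule η := by
              refine ⟨x.2, fun y hy => ?_⟩
              have hb0 : b x ⟨y, hy⟩ = 0 := by
                rw [LinearMap.mem_ker.mp hx]
                rfl
              simpa only [hbdef, LinearMap.mk₂_apply] using hb0
            rw [hisoM, ← hms1] at hxiso
            exact hms_mono 1 j hjpos (by omega) hxiso
          have hvnotW : (⟨v, hvm⟩ : ↥(m.toSubmodule)) ∉ Wm := fun h => hvnot h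
          obtain ⟨x', hxW, hxv⟩ := aux_perp_exists b hskewb Wm hkerb ⟨v, hvm⟩ hvnotW
          set x : g := (η v) • (x' : g) with hxdef
          have hxm : x ∈ m.toSubmodule := Submodule.smul_mem _ _ x'.2
          have hxperp : ∀ w ∈ ms j, η ⁅x, w⁆ = 0 := by
            intro w hw
            have hwm : w ∈ m.toSubmodule := hms_le_m j hw
            have hb0 : η ⁅(x' : g), w⁆ = 0 := by
              have hmem : (⟨w, hwm⟩ : ↥(m.toSubmodule)) ∈ Wm := hw
              have := hxW ⟨w, hwm⟩ hmem
              simpa only [hbdef, LinearMap.mk₂_apply] using this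
            rw [hxdef, smul_lie, map_smul, hb0, smul_zero]
          have hxv2 : η ⁅x, v⁆ = η v := by
            have hb1 : η ⁅(x' : g), v⁆ = 1 := by
              simpa only [hbdef, LinearMap.mk₂_apply] using hxv
            rw [hxdef, smul_lie, map_smul, hb1, smul_eq_mul, mul_one]
          have hstab : ∀ w ∈ ms j, ∀ t : ℕ,
              ((LieAlgebra.ad ℝ g (-x) : Module.End ℝ g) ^ t) w ∈ ms j := by
            intro w hw t
            induction t with
            | zero => simpa using hw
            | succ t iht =>
              rw [pow_succ', Module.End.mul_apply]
              set w' := ((LieAlgebra.ad ℝ g (-x) : Module.End ℝ g) ^ t) w with hw'def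
              have h1 : ⁅x, w'⁆ ∈ ms (j - 1) := hMbr j hjpos (by omega) x hxm w' iht
              have h2 : ⁅-x, w'⁆ ∈ ms (j - 1) := by
                rw [neg_lie]
                exact Submodule.neg_mem _ h1
              have h3 := hms_mono (j - 1) j (by omega) (by omega) h2
              simpa only [LieAlgebra.ad_apply] using h3
          have hkill : ∀ w ∈ ms j, ∀ t : ℕ,
              η (((LieAlgebra.ad ℝ g (-x) : Module.End ℝ g) ^ (t + 1)) w) = 0 := by
            intro w hw t
            rw [pow_succ', Module.End.mul_apply]
            set w' := ((LieAlgebra.ad ℝ g (-x) : Module.End ℝ g) ^ t) w with hw'def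
            have hw' : w' ∈ ms j := hstab w hw t
            have h0 : η ⁅-x, w'⁆ = 0 := by
              rw [neg_lie, map_neg, hxperp w' hw', neg_zero]
            simpa only [LieAlgebra.ad_apply] using h0
          set η' := η.comp (expAd (-x)) with hη'def
          have hη'msj : ∀ w ∈ ms j, η' w = η w := by
            intro w hw
            exact aux_expAd_eval_eq (fun t => hkill w hw t)
          have hη'v : η' v = 0 := by
            have hadv : ⁅-x, v⁆ ∈ ms j := by
              rw [neg_lie]
              refine Submodule.neg_mem _ ?_
              have := hMbr (j + 1) (by omega) hkj1 x hxm v hvms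
              simpa using this
            have h2 : ∀ t : ℕ,
                η (((LieAlgebra.ad ℝ g (-x) : Module.End ℝ g) ^ (t + 2)) v) = 0 := by
              intro t
              have hps : ((LieAlgebra.ad ℝ g (-x) : Module.End ℝ g) ^ (t + 2)) v
                  = ((LieAlgebra.ad ℝ g (-x) : Module.End ℝ g) ^ (t + 1)) ⁅-x, v⁆ := by
                rw [pow_succ, Module.End.mul_apply, LieAlgebra.ad_apply]
              rw [hps]
              exact hkill _ hadv t
            have h3 := aux_expAd_eval_eq' h1g h2
            rw [hη'def]
            simp only [LinearMap.comp_apply]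
            rw [h3, neg_lie, map_neg, hxv2]
            ring
          have hspan : ∃ vv, ms (j + 1) = ms j ⊔ Submodule.span ℝ {vv} := by
            have hgstep : ∃ u, gs (k + j + 1) = gs (k + j) ⊔ Submodule.span ℝ {u} := by
              refine aux_exists_sup_span_eq (hchain (k + j) (by omega)) ?_ ?_
              · intro hEq
                have e1 := hdim (k + j) (by omega)
                have e2 := hdim (k + j + 1) (by omega)
                rw [hEq] at e1
                omega
              · rw [hdim (k + j) (by omega), hdim (k + j + 1) (by omega)]
            obtain ⟨u, hu⟩ := hgstep
            refine ⟨p u, ?_⟩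
            have hidx : k + (j + 1) = (k + j) + 1 := by omega
            rw [hmsdef]
            simp only [hidx, hu, Submodule.map_sup, Submodule.map_span, Set.image_singleton]
          obtain ⟨vv, hvv⟩ := hspan
          have hvdec : ∃ (a : g) (c : ℝ), a ∈ ms j ∧ v = a + c • vv ∧ c ≠ 0 := by
            have hv' : v ∈ ms j ⊔ Submodule.span ℝ {vv} := by rw [← hvv]; exact hvms
            obtain ⟨a, ha, z, hz, hvz⟩ := Submodule.mem_sup.mp hv'
            obtain ⟨c, rfl⟩ := Submodule.mem_span_singleton.mp hz
            refine ⟨a, c, ha, hvz.symm, ?_⟩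
            rintro rfl
            rw [zero_smul, add_zero] at hvz
            exact hvnot (hvz ▸ ha)
          obtain ⟨a, c, ha, hveq, hc0⟩ := hvdec
          refine ⟨η', ?_, hXtinv η hηXt x, ?_, ?_, ?_⟩
          · obtain ⟨l0, hl0⟩ := hcoη
            refine ⟨l0 ++ [x], ?_⟩
            rw [List.foldl_append, ← hl0]
            rfl
          · intro v0 hv0
            rw [LinearMap.mem_ker, hη'def, LinearMap.comp_apply,
              hnval η hηV x hxm v0 (hV_sub hv0)]
            exact LinearMap.mem_ker.mp (hηV hv0)
          · rw [hntrans η' η (fun z hz => by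
              rw [hη'def]
              exact hnval η hηV x hxm z hz)]
            exact hηiso
          · intro w hw
            have hwV0 : w ∈ V0 := (Submodule.mem_inf.mp hw).1
            have hwms : w ∈ ms (j + 1) := (Submodule.mem_inf.mp hw).2
            have hwdec : ∃ (a' : g) (c' : ℝ), a' ∈ ms j ∧ w = a' + c' • vv := by
              have hw' : w ∈ ms j ⊔ Submodule.span ℝ {vv} := by rw [← hvv]; exact hwms
              obtain ⟨a', ha', z, hz, hwz⟩ := Submodule.mem_sup.mp hw'
              obtain ⟨c', rfl⟩ := Submodule.mem_span_singleton.mp hz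
              exact ⟨a', c', ha', hwz.symm⟩
            obtain ⟨a', c', ha', hweq⟩ := hwdec
            set w0 : g := w - (c' / c) • v with hw0def
            have hw0V0 : w0 ∈ V0 :=
              Submodule.sub_mem _ hwV0 (Submodule.smul_mem _ _ hvV0)
            have hw0ms : w0 ∈ ms j := by
              rw [hw0def, hweq, hveq]
              have hcalc : a' + c' • vv - (c' / c) • (a + c • vv)
                  = (a' - (c' / c) • a) + (c' - (c' / c) * c) • vv := by
                module
              rw [hcalc]
              have hcc : c' - (c' / c) * c = 0 := by
                field_simp
                ring
              rw [hcc, zero_smul, add_zero]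
              exact Submodule.sub_mem _ ha' (Submodule.smul_mem _ _ ha)
            have hwsplit : w = w0 + (c' / c) • v := by
              rw [hw0def]
              abel
            rw [hwsplit, map_add, map_smul]
            rw [hη'msj w0 hw0ms, hηvan w0 (Submodule.mem_inf.mpr ⟨hw0V0, hw0ms⟩),
              hη'v, smul_zero, add_zero]
  -- conclusion
  obtain ⟨ξ0, hco, hξ0Xt, hξ0V, hξ0n, hξ0van⟩ := key (d - k) le_rfl
  have hisoM0 : isotropyOn m.toSubmodule ξ0 = centerIn m.toSubmodule :=
    hA ξ0 hξ0Xt hξ0V hξ0n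
  refine ⟨ξ0, hco, ?_, hisoM0, hξ0n, ?_⟩
  · refine sup_le ?_ hξ0V
    intro w hw
    rw [LinearMap.mem_ker]
    refine hξ0van w (Submodule.mem_inf.mpr ⟨hw, ?_⟩)
    rw [hmsq]
    exact hV0m hw
  · rw [hC ξ0 hξ0V hξ0n, hisoM0]
end
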